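/- arXiv:1712.07504 — 4 statements merged into one kernel-verified Lean document; each statement's English description precedes it below -/
import Mathlib

section
/- For every finite graph G and every maximum matching M of G, the restriction of M to the subgraph induced on C(G) is a perfect matching of that subgraph (i.e., every vertex of C(G) is matched by M to another vertex of C(G)). -/
/-- A maximum matching of `G`: a matching with the greatest possible number of
edges. -/
def IsMaximumMatching {V : Type*} (G : SimpleGraph V) (M : G.Subgraph) : Prop :=
  M.IsMatching ∧ ∀ M' : G.Subgraph, M'.IsMatching → M'.edgeSet.ncard ≤ M.edgeSet.ncard

/-- `D(G)`: the set of vertices left unmatched by some maximum matching of `G`. -/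
def Dset {V : Type*} (G : SimpleGraph V) : Set V :=
  {v | ∃ M : G.Subgraph, IsMaximumMatching G M ∧ v ∉ M.verts}

/-- `A(G)`: the set of vertices not in `D(G)` having a neighbor in `D(G)`. -/
def Aset {V : Type*} (G : SimpleGraph V) : Set V :=
  {v | v ∉ Dset G ∧ ∃ w ∈ Dset G, G.Adj v w}

/-- `C(G) = V(G) \ (D(G) ∪ A(G))`. -/
def Cset {V : Type*} (G : SimpleGraph V) : Set V :=
  (Dset G ∪ Aset G)ᶜ

open SimpleGraph

section Helpers

variable {V : Type*} [Fintype V] {G : SimpleGraph V}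

/-- Add an edge between two unmatched vertices to a matching. -/
private lemma matching_augment {N : G.Subgraph} (hN : N.IsMatching)
    {x y : V} (hx : x ∉ N.verts) (hy : y ∉ N.verts) (hxy : G.Adj x y) :
    ∃ N' : G.Subgraph, N'.IsMatching ∧ N'.edgeSet = insert s(x, y) N.edgeSet := by
  have hxy' : x ≠ y := hxy.ne
  refine ⟨{ verts := insert x (insert y N.verts)
            Adj := fun p q => s(p, q) = s(x, y) ∨ N.Adj p q
            adj_sub := by
              rintro p q (h | h)
              · rcases Sym2.eq_iff.mp h with ⟨h1, h2⟩ | ⟨h1, h2⟩ <;>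
                  rw [h1, h2]
                exacts [hxy, hxy.symm]
              · exact h.adj_sub
            edge_vert := by
              rintro p q (h | h)
              · rcases Sym2.eq_iff.mp h with ⟨h1, -⟩ | ⟨h1, -⟩ <;> rw [h1]
                exacts [Set.mem_insert _ _, Set.mem_insert_of_mem _ (Set.mem_insert _ _)]
              · exact Set.mem_insert_of_mem _ (Set.mem_insert_of_mem _ h.fst_mem)
            symm := by
              constructor
              rintro p q (h | h)
              · exact Or.inl (by rw [Sym2.eq_swap]; exact h)
              · exact Or.inr h.symm }, ?_, ?_⟩
  · rintro v hv
    rcases Set.mem_insert_iff.mp hv with hvx | hv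
    · refine ⟨y, Or.inl (by rw [hvx]), ?_⟩
      rintro q (h | h)
      · rcases Sym2.eq_iff.mp h with ⟨-, h2⟩ | ⟨h1, h2⟩
        · exact h2
        · exact absurd (hvx.symm.trans h1) hxy'
      · exact absurd (hvx ▸ h.fst_mem) hx
    rcases Set.mem_insert_iff.mp hv with hvy | hv
    · refine ⟨x, Or.inl (by rw [hvy, Sym2.eq_swap]), ?_⟩
      rintro q (h | h)
      · rcases Sym2.eq_iff.mp h with ⟨h1, h2⟩ | ⟨-, h2⟩
        · exact absurd (h1.symm.trans hvy) hxy'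
        · exact h2
      · exact absurd (hvy ▸ h.fst_mem) hy
    · obtain ⟨p, hp, hpu⟩ := hN hv
      refine ⟨p, Or.inr hp, ?_⟩
      rintro q (h | h)
      · rcases Sym2.eq_iff.mp h with ⟨h1, -⟩ | ⟨h1, -⟩
        · exact absurd (h1 ▸ hv) hx
        · exact absurd (h1 ▸ hv) hy
      · exact hpu q h
  · ext e
    induction e using Sym2.ind with
    | _ p q =>
      show _ ∨ _ ↔ _
      simp only [Set.mem_insert_iff, Subgraph.mem_edgeSet]

/-- Swap a matching edge `ab` for the edge `ca`, where `c` is unmatched. -/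
private lemma matching_swap {N : G.Subgraph} (hN : N.IsMatching)
    {a b c : V} (hab : N.Adj a b) (hc : c ∉ N.verts) (hca : G.Adj c a) :
    ∃ N' : G.Subgraph, N'.IsMatching ∧ N'.verts = insert c (N.verts \ {b}) ∧
      N'.edgeSet = insert s(c, a) (N.edgeSet \ {s(a, b)}) ∧
      N'.edgeSet.ncard = N.edgeSet.ncard := by
  have hca' : c ≠ a := hca.ne
  have hab' : a ≠ b := hab.ne
  have haN : a ∈ N.verts := hab.fst_mem
  have hbN : b ∈ N.verts := hab.snd_mem
  suffices h : ∃ N' : G.Subgraph, N'.IsMatching ∧ N'.verts = insert c (N.verts \ {b}) ∧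
      N'.edgeSet = insert s(c, a) (N.edgeSet \ {s(a, b)}) by
    obtain ⟨N', h1, h2, h3⟩ := h
    refine ⟨N', h1, h2, h3, ?_⟩
    have hmem : s(a, b) ∈ N.edgeSet := Subgraph.mem_edgeSet.mpr hab
    have hnot : s(c, a) ∉ N.edgeSet \ {s(a, b)} := fun h =>
      hc (Subgraph.mem_edgeSet.mp h.1).fst_mem
    have e1 := Set.ncard_insert_of_notMem hnot (Set.toFinite _)
    have e2 := Set.ncard_diff_singleton_add_one hmem (Set.toFinite _)
    rw [h3]
    omega
  refine ⟨{ verts := insert c (N.verts \ {b})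
            Adj := fun p q => s(p, q) = s(c, a) ∨ (N.Adj p q ∧ s(p, q) ≠ s(a, b))
            adj_sub := by
              rintro p q (h | ⟨h, -⟩)
              · rcases Sym2.eq_iff.mp h with ⟨h1, h2⟩ | ⟨h1, h2⟩ <;> rw [h1, h2]
                exacts [hca, hca.symm]
              · exact h.adj_sub
            edge_vert := by
              rintro p q (h | ⟨h, hne⟩)
              · rcases Sym2.eq_iff.mp h with ⟨h1, -⟩ | ⟨h1, -⟩ <;> rw [h1]
                · exact Set.mem_insert _ _
                · exact Set.mem_insert_of_mem _ ⟨haN, hab'⟩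
              · refine Set.mem_insert_of_mem _ ⟨h.fst_mem, ?_⟩
                rintro rfl
                exact hne (by rw [(hN hbN).unique h hab.symm, Sym2.eq_swap])
            symm := by
              constructor
              rintro p q (h | ⟨h, hne⟩)
              · exact Or.inl (by rw [Sym2.eq_swap]; exact h)
              · exact Or.inr ⟨h.symm, by rwa [Sym2.eq_swap]⟩ }, ?_, rfl, ?_⟩
  · rintro v hv
    rcases Set.mem_insert_iff.mp hv with hvc | ⟨hvN, hvb⟩
    · refine ⟨a, Or.inl (by rw [hvc]), ?_⟩
      rintro q (h | ⟨h, -⟩)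
      · rcases Sym2.eq_iff.mp h with ⟨-, h2⟩ | ⟨h1, -⟩
        · exact h2
        · exact absurd (hvc.symm.trans h1) hca'
      · exact absurd (hvc ▸ h.fst_mem) hc
    by_cases hva : v = a
    · refine ⟨c, Or.inl (by rw [hva, Sym2.eq_swap]), ?_⟩
      rintro q (h | ⟨h, hne⟩)
      · rcases Sym2.eq_iff.mp h with ⟨h1, -⟩ | ⟨-, h2⟩
        · exact absurd (h1 ▸ hvN) hc
        · exact h2
      · exfalso
        apply hne
        rw [(hN hvN).unique h (by rw [hva]; exact hab), hva]
    · obtain ⟨p, hp, hpu⟩ := hN hvN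
      have hvp : s(v, p) ≠ s(a, b) := by
        intro h
        rcases Sym2.eq_iff.mp h with ⟨h1, -⟩ | ⟨h1, -⟩
        exacts [hva h1, hvb h1]
      refine ⟨p, Or.inr ⟨hp, hvp⟩, ?_⟩
      rintro q (h | ⟨h, -⟩)
      · rcases Sym2.eq_iff.mp h with ⟨h1, -⟩ | ⟨h1, -⟩
        · exact absurd (h1 ▸ hvN) hc
        · exact absurd h1 hva
      · exact hpu q h
  · ext e
    induction e using Sym2.ind with
    | _ p q =>
      show _ ∨ _ ↔ _
      simp only [Set.mem_insert_iff, Set.mem_diff, Set.mem_singleton_iff,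
        Subgraph.mem_edgeSet]

private lemma key_lemma (n : ℕ) : ∀ (M N : G.Subgraph), IsMaximumMatching G M →
    IsMaximumMatching G N → ∀ u w z : V, u ∉ N.verts → M.Adj w z →
    (M.edgeSet \ N.edgeSet).ncard ≤ n →
    w ∈ Dset G ∨ z ∈ Dset G ∨
      ∃ Ms : G.Subgraph, IsMaximumMatching G Ms ∧ u ∉ Ms.verts ∧ Ms.Adj w z ∧
        Ms.edgeSet ⊆ M.edgeSet ∪ N.edgeSet := by
  induction n with
  | zero =>
    intro M N hM hN u w z huN hwz hcard
    by_cases huw : u = w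
    · exact Or.inl ⟨N, hN, huw ▸ huN⟩
    by_cases huz : u = z
    · exact Or.inr (Or.inl ⟨N, hN, huz ▸ huN⟩)
    by_cases huM : u ∈ M.verts
    · exfalso
      obtain ⟨u₁, hu1, -⟩ := hM.1 huM
      have hempty : M.edgeSet \ N.edgeSet = ∅ := by
        rw [← Set.ncard_eq_zero (Set.toFinite _)]
        omega
      have hm : s(u, u₁) ∈ M.edgeSet \ N.edgeSet :=
        ⟨Subgraph.mem_edgeSet.mpr hu1, fun h => huN (Subgraph.mem_edgeSet.mp h).fst_mem⟩
      rw [hempty] at hm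
      exact hm
    · exact Or.inr (Or.inr ⟨M, hM, huM, hwz, Set.subset_union_left⟩)
  | succ n ih =>
    intro M N hM hN u w z huN hwz hcard
    by_cases huw : u = w
    · exact Or.inl ⟨N, hN, huw ▸ huN⟩
    by_cases huz : u = z
    · exact Or.inr (Or.inl ⟨N, hN, huz ▸ huN⟩)
    by_cases huM : u ∈ M.verts
    swap
    · exact Or.inr (Or.inr ⟨M, hM, huM, hwz, Set.subset_union_left⟩)
    obtain ⟨u₁, hu1, hu1uniq⟩ := hM.1 huM
    have hu1w : u₁ ≠ w := by
      rintro rfl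
      exact huz ((hM.1 hu1.snd_mem).unique hu1.symm hwz)
    have hu1z : u₁ ≠ z := by
      rintro rfl
      exact huw ((hM.1 hwz.snd_mem).unique hu1.symm hwz.symm)
    by_cases hu1N : u₁ ∈ N.verts
    swap
    · exfalso
      obtain ⟨N', hN', hN'edge⟩ := matching_augment hN.1 huN hu1N hu1.adj_sub
      have hnot : s(u, u₁) ∉ N.edgeSet := fun h =>
        huN (Subgraph.mem_edgeSet.mp h).fst_mem
      have hcard1 : N'.edgeSet.ncard = N.edgeSet.ncard + 1 := by
        rw [hN'edge, Set.ncard_insert_of_notMem hnot (Set.toFinite _)]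
      have := hN.2 N' hN'
      omega
    obtain ⟨u₂, hu2, hu2uniq⟩ := hN.1 hu1N
    have hu2u : u₂ ≠ u := fun h => huN (h ▸ hu2.snd_mem)
    obtain ⟨N', hN'm, hN'verts, hN'edge, hN'card⟩ := matching_swap hN.1 hu2 huN hu1.adj_sub
    have hN'max : IsMaximumMatching G N' := ⟨hN'm, fun M'' hM'' => hN'card ▸ hN.2 M'' hM''⟩
    have hu2N' : u₂ ∉ N'.verts := by
      rw [hN'verts]
      rintro (h | h)
      · exact hu2u h
      · exact h.2 rfl
    by_cases hu2w : u₂ = w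
    · exact Or.inl ⟨N', hN'max, hu2w ▸ hu2N'⟩
    by_cases hu2z : u₂ = z
    · exact Or.inr (Or.inl ⟨N', hN'max, hu2z ▸ hu2N'⟩)
    have hmm : s(u, u₁) ∈ M.edgeSet \ N.edgeSet :=
      ⟨Subgraph.mem_edgeSet.mpr hu1, fun h => huN (Subgraph.mem_edgeSet.mp h).fst_mem⟩
    have hu12M : s(u₁, u₂) ∉ M.edgeSet := fun h =>
      hu2u ((hM.1 hu1.snd_mem).unique (Subgraph.mem_edgeSet.mp h) hu1.symm)
    have hdiff : M.edgeSet \ N'.edgeSet = (M.edgeSet \ N.edgeSet) \ {s(u, u₁)} := by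
      rw [hN'edge]
      ext e
      simp only [Set.mem_diff, Set.mem_insert_iff, Set.mem_singleton_iff]
      constructor
      · rintro ⟨heM, hnot⟩
        refine ⟨⟨heM, fun heN => ?_⟩, fun h => hnot (Or.inl h)⟩
        by_cases h12 : e = s(u₁, u₂)
        · exact hu12M (h12 ▸ heM)
        · exact hnot (Or.inr ⟨heN, h12⟩)
      · rintro ⟨⟨heM, heN⟩, hne⟩
        exact ⟨heM, by rintro (h | ⟨h, -⟩); exacts [hne h, heN h]⟩
    have hcard' : (M.edgeSet \ N'.edgeSet).ncard ≤ n := by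
      rw [hdiff]
      have := Set.ncard_diff_singleton_add_one hmm (Set.toFinite _)
      omega
    rcases ih M N' hM hN'max u₂ w z hu2N' hwz hcard' with h | h | ⟨Ms, hMs, huMs, hMswz, hMssub⟩
    · exact Or.inl h
    · exact Or.inr (Or.inl h)
    have hMssub' : Ms.edgeSet ⊆ M.edgeSet ∪ N.edgeSet := by
      intro e he
      rcases hMssub he with h | h
      · exact Or.inl h
      · rw [hN'edge] at h
        rcases h with h | ⟨h, -⟩
        · exact Or.inl (h ▸ Subgraph.mem_edgeSet.mpr hu1)
        · exact Or.inr h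
    by_cases huMsv : u ∈ Ms.verts
    swap
    · exact Or.inr (Or.inr ⟨Ms, hMs, huMsv, hMswz, hMssub'⟩)
    obtain ⟨d, hd, -⟩ := hMs.1 huMsv
    have hdu1 : d = u₁ := by
      rcases hMssub' (Subgraph.mem_edgeSet.mpr hd) with h | h
      · exact hu1uniq d (Subgraph.mem_edgeSet.mp h)
      · exact absurd (Subgraph.mem_edgeSet.mp h).fst_mem huN
    rw [hdu1] at hd
    obtain ⟨Mf, hMfm, hMfverts, hMfedge, hMfcard⟩ :=
      matching_swap hMs.1 hd.symm huMs hu2.adj_sub.symm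
    refine Or.inr (Or.inr ⟨Mf, ⟨hMfm, fun M'' h'' => hMfcard ▸ hMs.2 M'' h''⟩, ?_, ?_, ?_⟩)
    · rw [hMfverts]
      rintro (h | h)
      · exact hu2u h.symm
      · exact h.2 rfl
    · rw [← Subgraph.mem_edgeSet, hMfedge]
      refine Set.mem_insert_of_mem _ ⟨Subgraph.mem_edgeSet.mpr hMswz, ?_⟩
      intro h
      rcases Sym2.eq_iff.mp h with ⟨h1, -⟩ | ⟨h1, -⟩
      · exact hu1w h1.symm
      · exact huw h1.symm
    · rw [hMfedge]
      rintro e (he | ⟨he, -⟩)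
      · exact Or.inr (he ▸ Subgraph.mem_edgeSet.mpr hu2.symm)
      · exact hMssub' he

end Helpers

/-- For every finite graph `G` and every maximum matching `M` of `G`, the
restriction of `M` to the subgraph induced on `C(G)` is a perfect matching of
that subgraph: every vertex of `C(G)` is matched by `M` to another vertex of
`C(G)`. -/
theorem gallaiEdmonds_C_perfectlyMatched {V : Type*} [Fintype V]
    (G : SimpleGraph V) (M : G.Subgraph) (hM : IsMaximumMatching G M) :
    ∀ v ∈ Cset G, ∃ w ∈ Cset G, M.Adj v w := by
  intro v hv
  have hvD : v ∉ Dset G := fun h => hv (Or.inl h)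
  have hvA : v ∉ Aset G := fun h => hv (Or.inr h)
  have hvM : v ∈ M.verts := by
    by_contra h
    exact hvD ⟨M, hM, h⟩
  obtain ⟨w, hw, -⟩ := hM.1 hvM
  refine ⟨w, ?_, hw⟩
  intro hmem
  rcases hmem with hwD | hwA
  · exact hvA ⟨hvD, w, hwD, hw.adj_sub⟩
  · obtain ⟨hwD, u, huD, hwu⟩ := hwA
    have hvu : v ≠ u := fun h => hvD (h ▸ huD)
    obtain ⟨N, hN, huN⟩ := huD
    rcases key_lemma (M.edgeSet \ N.edgeSet).ncard M N hM hN u w v huN hw.symm le_rfl with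
      h | h | ⟨Ms, hMs, huMs, hMswv, -⟩
    · exact hwD h
    · exact hvD h
    · obtain ⟨Mf, hMfm, hMfverts, hMfedge, hMfcard⟩ :=
        matching_swap hMs.1 hMswv huMs hwu.symm
      refine hvD ⟨Mf, ⟨hMfm, fun M'' h'' => hMfcard ▸ hMs.2 M'' h''⟩, ?_⟩
      rw [hMfverts]
      rintro (h | h)
      · exact hvu h
      · exact h.2 rfl
end

section
/- For every finite graph G, every maximum matching M of G, and every connected component K of the subgraph induced on D(G), exactly one vertex of K is not matched by M to another vertex of K (that vertex is either unmatched by M or matched by M to a vertex of A(G)); hence the restriction of M to K is a near-perfect matching of K. -/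
open Function Set

namespace GEaux

variable {V : Type*} [Fintype V] {G : SimpleGraph V}

/-- A matching given as an involutive partner function. -/
def MInv (G : SimpleGraph V) (f : V → V) : Prop :=
  Function.Involutive f ∧ ∀ x, f x ≠ x → G.Adj x (f x)

/-- Size of a matching-involution: number of matched vertices. -/
noncomputable def msize (f : V → V) : ℕ := {x | f x ≠ x}.ncard

lemma MInv.id (G : SimpleGraph V) : MInv G id := ⟨fun _ => rfl, fun x h => absurd rfl h⟩

set_option linter.unusedSectionVars false
set_option linter.unusedVariables false
set_option linter.unusedTactic false

open Classical in
noncomputable def pf (M : G.Subgraph) (hm : M.IsMatching) : V → V :=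
  fun v => if h : v ∈ M.verts then (hm h).choose else v

lemma pf_adj {M : G.Subgraph} (hm : M.IsMatching) {v : V} (hv : v ∈ M.verts) :
    M.Adj v (pf M hm v) := by
  simp only [pf, dif_pos hv]
  exact (hm hv).choose_spec.1

lemma pf_eq_of_adj {M : G.Subgraph} (hm : M.IsMatching) {v w : V} (h : M.Adj v w) :
    pf M hm v = w := by
  have hv : v ∈ M.verts := M.edge_vert h
  simp only [pf, dif_pos hv]
  exact ((hm hv).choose_spec.2 _ h).symm

lemma pf_fix_iff {M : G.Subgraph} (hm : M.IsMatching) {v : V} :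
    pf M hm v = v ↔ v ∉ M.verts := by
  constructor
  · intro h hv
    exact (M.adj_sub (pf_adj hm hv)).ne' h
  · intro h
    unfold pf
    rw [dif_neg h]

lemma pf_minv {M : G.Subgraph} (hm : M.IsMatching) : MInv G (pf M hm) := by
  constructor
  · intro v
    by_cases hv : v ∈ M.verts
    · exact pf_eq_of_adj hm ((pf_adj hm hv).symm)
    · simp only [(pf_fix_iff hm).2 hv]
  · intro x hx
    have hxv : x ∈ M.verts := by
      by_contra h
      exact hx ((pf_fix_iff hm).2 h)
    exact M.adj_sub (pf_adj hm hxv)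

lemma pf_supp {M : G.Subgraph} (hm : M.IsMatching) : {x | pf M hm x ≠ x} = M.verts := by
  ext x
  simp only [mem_setOf_eq, ne_eq]
  rw [not_iff_comm, pf_fix_iff hm]

/-- The subgraph matching associated to a matching-involution. -/
def toSub (G : SimpleGraph V) (f : V → V) (hf : MInv G f) : G.Subgraph where
  verts := {x | f x ≠ x}
  Adj x y := f x = y ∧ x ≠ y
  adj_sub := by
    rintro v w ⟨h1, h2⟩
    have := hf.2 v (by rw [h1]; exact fun hh => h2 hh.symm)
    rwa [h1] at this
  edge_vert := by
    rintro v w ⟨h1, h2⟩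
    simp only [mem_setOf_eq, h1]
    exact fun hh => h2 hh.symm
  symm := by
    constructor
    rintro v w ⟨h1, h2⟩
    exact ⟨by rw [← h1, hf.1], h2.symm⟩

lemma toSub_isMatching (f : V → V) (hf : MInv G f) : (toSub G f hf).IsMatching := by
  intro v hv
  refine ⟨f v, ⟨rfl, fun h => hv h.symm⟩, ?_⟩
  rintro y ⟨h1, _⟩
  exact h1.symm

lemma toSub_verts (f : V → V) (hf : MInv G f) : (toSub G f hf).verts = {x | f x ≠ x} := rfl

/-- Key cardinality: twice the number of edges is the number of matched vertices. -/
lemma verts_ncard_eq (M : G.Subgraph) (hm : M.IsMatching) :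
    M.verts.ncard = 2 * M.edgeSet.ncard := by
  classical
  have hvfin : M.verts.Finite := Set.toFinite _
  have hefin : M.edgeSet.Finite := Set.toFinite _
  rw [Set.ncard_eq_toFinset_card _ hvfin, Set.ncard_eq_toFinset_card _ hefin]
  set vs := hvfin.toFinset with hvs
  set es := hefin.toFinset with hes
  have hmap : ∀ v ∈ vs, s(v, pf M hm v) ∈ es := by
    intro v hv
    rw [hes, Set.Finite.mem_toFinset]
    exact SimpleGraph.Subgraph.mem_edgeSet.2 (pf_adj hm (by rwa [hvs, Set.Finite.mem_toFinset] at hv))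
  have hfib : ∀ e ∈ es, (vs.filter fun v => s(v, pf M hm v) = e).card = 2 := by
    intro e he
    induction e with
    | _ x y =>
      rw [hes, Set.Finite.mem_toFinset, SimpleGraph.Subgraph.mem_edgeSet] at he
      have hxy : x ≠ y := (M.adj_sub he).ne
      have : (vs.filter fun v => s(v, pf M hm v) = s(x, y)) = {x, y} := by
        ext v
        simp only [Finset.mem_filter, Finset.mem_insert, Finset.mem_singleton]
        constructor
        · rintro ⟨-, hv⟩
          rw [Sym2.eq_iff] at hv
          rcases hv with ⟨h, -⟩ | ⟨h, -⟩
          · exact Or.inl h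
          · exact Or.inr h
        · rintro (rfl | rfl)
          · refine ⟨?_, by rw [pf_eq_of_adj hm he]⟩
            rw [hvs, Set.Finite.mem_toFinset]
            exact M.edge_vert he
          · refine ⟨?_, by rw [pf_eq_of_adj hm he.symm]; exact Sym2.eq_swap⟩
            rw [hvs, Set.Finite.mem_toFinset]
            exact M.edge_vert he.symm
      rw [this, Finset.card_insert_of_notMem (by simpa using hxy), Finset.card_singleton]
  calc vs.card = ∑ e ∈ es, (vs.filter fun v => s(v, pf M hm v) = e).card :=
        Finset.card_eq_sum_card_fiberwise hmap
    _ = ∑ _e ∈ es, 2 := Finset.sum_congr rfl hfib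
    _ = 2 * es.card := by rw [Finset.sum_const, smul_eq_mul, mul_comm]

/-- msize of the partner function equals verts count. -/
lemma msize_pf {M : G.Subgraph} (hm : M.IsMatching) : msize (pf M hm) = M.verts.ncard := by
  rw [msize, pf_supp hm]

lemma msize_toSub (f : V → V) (hf : MInv G f) :
    msize f = 2 * (toSub G f hf).edgeSet.ncard := by
  rw [← verts_ncard_eq _ (toSub_isMatching f hf), toSub_verts]; rfl

/-- A maximum matching-involution. -/
def MaxM (G : SimpleGraph V) (f : V → V) : Prop :=
  MInv G f ∧ ∀ g, MInv G g → msize g ≤ msize f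

lemma exists_maxM (G : SimpleGraph V) : ∃ f, MaxM G f := by
  classical
  set S : Set ℕ := {n | ∃ f, MInv G f ∧ msize f = n} with hS
  have hne : S.Nonempty := ⟨msize (fun x : V => x), (id : V → V), MInv.id G, rfl⟩
  have hbdd : BddAbove S := by
    refine ⟨Fintype.card V, ?_⟩
    rintro n ⟨f, hf, rfl⟩
    calc msize f ≤ (Set.univ : Set V).ncard := Set.ncard_le_ncard (Set.subset_univ _) (Set.toFinite _)
    _ = Fintype.card V := by rw [Set.ncard_univ, Nat.card_eq_fintype_card]
  obtain ⟨f, hf, hmax⟩ := Nat.sSup_mem hne hbdd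
  exact ⟨f, hf, fun g hg => hmax ▸ le_csSup hbdd ⟨g, hg, rfl⟩⟩

end GEaux

namespace GEaux

variable {V : Type*} [Fintype V] {G : SimpleGraph V}

lemma msize_even (f : V → V) (hf : MInv G f) : Even (msize f) := by
  rw [msize_toSub f hf]; exact even_two_mul _

/-- Maximality transfer: partner function of a maximum subgraph matching is MaxM. -/
lemma maxM_pf {M : G.Subgraph} (hM : IsMaximumMatching G M) : MaxM G (pf M hM.1) := by
  refine ⟨pf_minv hM.1, fun g hg => ?_⟩
  have h1 := hM.2 (toSub G g hg) (toSub_isMatching g hg)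
  have h2 := msize_toSub g hg
  have h3 := verts_ncard_eq M hM.1
  have h4 := msize_pf hM.1
  omega

/-- Conversely, toSub of a MaxM involution is a maximum matching. -/
lemma isMaximumMatching_toSub (f : V → V) (hf : MaxM G f) :
    IsMaximumMatching G (toSub G f hf.1) := by
  refine ⟨toSub_isMatching f hf.1, fun M' hM' => ?_⟩
  have h1 := hf.2 (pf M' hM') (pf_minv hM')
  have h2 := msize_pf hM'
  have h3 := verts_ncard_eq M' hM'
  have h4 := msize_toSub f hf.1
  omega

/-- `D(G)` in involution language. -/
def Dv (G : SimpleGraph V) : Set V := {v | ∃ f, MaxM G f ∧ f v = v}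

lemma Dv_eq_Dset : Dv G = Dset G := by
  ext v
  constructor
  · rintro ⟨f, hf, hv⟩
    exact ⟨toSub G f hf.1, isMaximumMatching_toSub f hf, fun h => h hv⟩
  · rintro ⟨M, hM, hv⟩
    exact ⟨pf M hM.1, maxM_pf hM, (pf_fix_iff hM.1).2 hv⟩

/-- Any two maximum matching-involutions have the same size. -/
lemma maxM_msize_eq {f g : V → V} (hf : MaxM G f) (hg : MaxM G g) : msize f = msize g :=
  le_antisymm (hg.2 f hf.1) (hf.2 g hg.1)

/-- Parity lemma: an involution-invariant finite set has the same parity as its fixed part. -/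
lemma parity_invariant_aux (f : V → V) (hf : Function.Involutive f) :
    ∀ (n : ℕ) (S : Set V), S.ncard = n → (∀ x ∈ S, f x ∈ S) →
      S.ncard % 2 = (S ∩ {x | f x = x}).ncard % 2 := by
  classical
  intro n
  induction n using Nat.strong_induction_on with
  | _ n ih =>
  intro S hn hinv
  by_cases hfix : ∀ x ∈ S, f x = x
  · have : S ∩ {x | f x = x} = S := by
      apply Set.inter_eq_self_of_subset_left
      intro x hx; exact hfix x hx
    rw [this]
  · push_neg at hfix
    obtain ⟨x, hxS, hfx⟩ := hfix
    set S' := S \ {x, f x} with hS'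
    have hxmem : f x ∈ S := hinv x hxS
    have hsub : {x, f x} ⊆ S := by
      rintro y (rfl | rfl); exact hxS; exact hxmem
    have hcard2 : ({x, f x} : Set V).ncard = 2 := by
      rw [Set.ncard_pair (Ne.symm hfx)]
    have hS'card : S'.ncard = S.ncard - 2 := by
      rw [hS', Set.ncard_diff hsub (Set.toFinite _), hcard2]
    have h2le : 2 ≤ S.ncard := hcard2 ▸ Set.ncard_le_ncard hsub (Set.toFinite _)
    have hlt : S'.ncard < S.ncard := by omega
    have hinv' : ∀ y ∈ S', f y ∈ S' := by
      rintro y ⟨hyS, hy⟩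
      refine ⟨hinv y hyS, ?_⟩
      simp only [Set.mem_insert_iff, Set.mem_singleton_iff] at hy ⊢
      push_neg at hy ⊢
      constructor
      · intro h; exact hy.2 (by rw [← h, hf y])
      · intro h; exact hy.1 (hf.injective h)
    have hfixeq : S' ∩ {y | f y = y} = S ∩ {y | f y = y} := by
      ext y
      simp only [hS', Set.mem_inter_iff, Set.mem_diff, Set.mem_insert_iff,
        Set.mem_singleton_iff, Set.mem_setOf_eq]
      constructor
      · rintro ⟨⟨h1, _⟩, h2⟩; exact ⟨h1, h2⟩
      · rintro ⟨h1, h2⟩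
        refine ⟨⟨h1, ?_⟩, h2⟩
        push_neg
        constructor
        · rintro rfl; exact hfx h2
        · rintro rfl; exact hfx ((hf x).symm.trans h2).symm
    have := ih S'.ncard (by omega) S' rfl hinv'
    rw [hfixeq] at this
    omega

lemma parity_invariant (f : V → V) (hf : Function.Involutive f) (S : Set V)
    (hinv : ∀ x ∈ S, f x ∈ S) : S.ncard % 2 = (S ∩ {x | f x = x}).ncard % 2 :=
  parity_invariant_aux f hf S.ncard S rfl hinv

/-- Augmenting: add an edge between two exposed vertices. -/
lemma augment {f : V → V} (hf : MInv G f) {u v : V} (huv : G.Adj u v)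
    (hu : f u = u) (hv : f v = v) :
    ∃ g, MInv G g ∧ msize g = msize f + 2 ∧ g u = v ∧ g v = u ∧
      ∀ x, x ≠ u → x ≠ v → g x = f x := by
  classical
  set g : V → V := fun x => if x = u then v else if x = v then u else f x with hg
  have hune : u ≠ v := huv.ne
  have hgu : g u = v := by simp [hg]
  have hgv : g v = u := by simp [hg, hune.symm]
  have hgoth : ∀ x, x ≠ u → x ≠ v → g x = f x := by
    intro x h1 h2; simp [hg, h1, h2]
  have hginv : Function.Involutive g := by
    intro x
    by_cases h1 : x = u
    · subst h1; rw [hgu, hgv]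
    by_cases h2 : x = v
    · subst h2; rw [hgv, hgu]
    · rw [hgoth x h1 h2]
      have hfu : f x ≠ u := fun h => h1 (by rw [← hu, ← h, hf.1])
      have hfv : f x ≠ v := fun h => h2 (by rw [← hv, ← h, hf.1])
      rw [hgoth _ hfu hfv, hf.1]
  refine ⟨g, ⟨hginv, ?_⟩, ?_, hgu, hgv, hgoth⟩
  · intro x hx
    by_cases h1 : x = u
    · subst h1; rw [hgu]; exact huv
    by_cases h2 : x = v
    · subst h2; rw [hgv]; exact huv.symm
    · rw [hgoth x h1 h2] at hx ⊢; exact hf.2 x hx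
  · have hsupp : {x | g x ≠ x} = {x | f x ≠ x} ∪ {u, v} := by
      ext x
      simp only [Set.mem_setOf_eq, Set.mem_union, Set.mem_insert_iff, Set.mem_singleton_iff]
      by_cases h1 : x = u
      · subst h1; simp [hgu, Ne.symm hune, hu]
      by_cases h2 : x = v
      · subst h2; simp [hgv, hune, hv]
      · rw [hgoth x h1 h2]; simp [h1, h2]
    have hdisj : Disjoint {x | f x ≠ x} ({u, v} : Set V) := by
      rw [Set.disjoint_right]
      rintro y (rfl | rfl) <;> simp [hu, hv]
    rw [msize, msize, hsupp, Set.ncard_union_eq hdisj (Set.toFinite _) (Set.toFinite _),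
      Set.ncard_pair hune]

/-- Deleting the edge at a matched vertex `a` (and its partner). -/
lemma delete_edge {f : V → V} (hf : MInv G f) {a : V} (ha : f a ≠ a) :
    ∃ g, MInv G g ∧ msize g + 2 = msize f ∧ g a = a ∧ g (f a) = f a ∧
      ∀ x, x ≠ a → x ≠ f a → g x = f x := by
  classical
  set g : V → V := fun x => if x = a then a else if x = f a then f a else f x with hg
  have hga : g a = a := by simp [hg]
  have hgfa : g (f a) = f a := by simp [hg, ha]
  have hgoth : ∀ x, x ≠ a → x ≠ f a → g x = f x := by
    intro x h1 h2; simp [hg, h1, h2]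
  have hginv : Function.Involutive g := by
    intro x
    by_cases h1 : x = a
    · subst h1; rw [hga, hga]
    by_cases h2 : x = f a
    · subst h2; rw [hgfa, hgfa]
    · rw [hgoth x h1 h2]
      have hf1 : f x ≠ a := fun h => h2 (by rw [← h, hf.1 x])
      have hf2 : f x ≠ f a := fun h => h1 (hf.1.injective h)
      rw [hgoth _ hf1 hf2, hf.1]
  refine ⟨g, ⟨hginv, ?_⟩, ?_, hga, hgfa, hgoth⟩
  · intro x hx
    by_cases h1 : x = a
    · subst h1; rw [hga] at hx; exact absurd rfl hx
    by_cases h2 : x = f a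
    · subst h2; rw [hgfa] at hx; exact absurd rfl hx
    · rw [hgoth x h1 h2] at hx ⊢; exact hf.2 x hx
  · have hsupp : {x | f x ≠ x} = {x | g x ≠ x} ∪ {a, f a} := by
      ext x
      simp only [Set.mem_setOf_eq, Set.mem_union, Set.mem_insert_iff, Set.mem_singleton_iff]
      by_cases h1 : x = a
      · subst h1
        simp only [hga]
        tauto
      by_cases h2 : x = f a
      · subst h2
        have h3 : f (f a) = a := hf.1 a
        have h4 : a ≠ f a := fun h => ha h.symm
        simp only [h3, hgfa]
        tauto
      · rw [hgoth x h1 h2]; simp [h1, h2]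
    have hdisj : Disjoint {x | g x ≠ x} ({a, f a} : Set V) := by
      rw [Set.disjoint_right]
      rintro y (rfl | rfl) <;> simp [hga, hgfa]
    rw [msize, msize, hsupp, Set.ncard_union_eq hdisj (Set.toFinite _) (Set.toFinite _),
      Set.ncard_pair (Ne.symm ha)]

end GEaux

namespace GEaux

variable {V : Type*} [Fintype V] {G : SimpleGraph V}

lemma odd_dvd_of_dvd_two_mul {d m : ℕ} (hodd : d % 2 = 1) (h : d ∣ 2 * m) : d ∣ m := by
  obtain ⟨c, hc⟩ := h
  have h2 : (2 : ℕ) ∣ d * c := ⟨m, hc.symm⟩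
  have h2c : 2 ∣ c := by
    rcases (Nat.Prime.dvd_mul Nat.prime_two).1 h2 with h | h
    · omega
    · exact h
  obtain ⟨c', rfl⟩ := h2c
  refine ⟨c', ?_⟩
  have h3 : d * (2 * c') = 2 * (d * c') := by ring
  omega

/-- The orbit engine: structure of the orbit of an exposed vertex under two matchings. -/
lemma engine {f g : V → V} (hf : Function.Involutive f) (hg : Function.Involutive g)
    (v : V) (hv : g v = v) :
    ∃ O : Set V, v ∈ O ∧ (∀ x ∈ O, f x ∈ O) ∧ (∀ x ∈ O, g x ∈ O) ∧
      ((∃ z, f z = z ∧ O ∩ {x | f x = x} = {z} ∧ O ∩ {x | g x = x} = {v}) ∨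
       (∃ y, y ≠ v ∧ g y = y ∧ O ∩ {x | g x = x} = {v, y} ∧ O ∩ {x | f x = x} = ∅)) := by
  classical
  set s : V → V := fun x => f (g x) with hs
  set t : V → V := fun x => g (f x) with ht
  have hts : ∀ x, t (s x) = x := fun x => by simp [hs, ht, hf (g x), hg x]
  have hper : ∃ n, 0 < n ∧ s^[n] v = v := by
    set sE : Equiv.Perm V := (hg.toPerm g).trans (hf.toPerm f) with hsE
    have hcoe : ⇑sE = s := by
      funext x
      simp [hsE, hs, Function.Involutive.coe_toPerm]
    refine ⟨orderOf sE, (isOfFinOrder_of_finite sE).orderOf_pos, ?_⟩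
    rw [← hcoe]
    have h1 : (⇑sE)^[orderOf sE] = ⇑(sE ^ orderOf sE) := Equiv.Perm.iterate_eq_pow sE (orderOf sE)
    rw [h1, pow_orderOf_eq_one]
    rfl
  set d : ℕ := Function.minimalPeriod s v with hdd
  obtain ⟨n, hn0, hnper⟩ := hper
  have hd0 : 0 < d := (Function.IsPeriodicPt.minimalPeriod_pos hn0 hnper)
  have hsd : s^[d] v = v := Function.iterate_minimalPeriod
  set a : ℕ → V := fun k => s^[k] v with ha
  have ha0 : a 0 = v := rfl
  have hreturn : ∀ k, a k = v → d ∣ k := by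
    intro k hk
    exact (Function.isPeriodicPt_iff_minimalPeriod_dvd).1 hk
  have htsk : ∀ k x, t^[k] (s^[k] x) = x := by
    intro k
    induction k with
    | zero => intro x; rfl
    | succ k ih =>
      intro x
      rw [Function.iterate_succ_apply s, Function.iterate_succ_apply' t]
      rw [ih (s x), hts]
  have hcancel : ∀ k m x, t^[k] (s^[k + m] x) = s^[m] x := by
    intro k m x
    rw [Function.iterate_add_apply s k m x, htsk]
  have ainj : ∀ j k, j < d → k < d → a j = a k → j = k := by
    have key : ∀ j k, j ≤ k → k < d → a j = a k → j = k := by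
      intro j k hjk hk heq
      have h1 : t^[j] (a j) = v := by
        show t^[j] (s^[j] v) = v
        rw [htsk]
      have h2 : t^[j] (a k) = a (k - j) := by
        have hc := hcancel j (k - j) v
        rw [show j + (k - j) = k by omega] at hc
        exact hc
      rw [heq, h2] at h1
      have hdvd := hreturn _ h1
      have h0 : k - j = 0 := Nat.eq_zero_of_dvd_of_lt hdvd (by omega)
      omega
    intro j k hj hk heq
    rcases le_total j k with h | h
    · exact key j k h hk heq
    · exact (key k j h hj heq.symm).symm
  have hgconj : ∀ k x, g (s^[k] x) = t^[k] (g x) := by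
    intro k
    induction k with
    | zero => intro x; rfl
    | succ k ih =>
      intro x
      rw [Function.iterate_succ_apply' s, Function.iterate_succ_apply' t]
      have h1 : g (s (s^[k] x)) = t (g (s^[k] x)) := by
        simp [hs, ht, hg (g (s^[k] x))]
      rw [h1, ih]
  have hga : ∀ k, k < d → ∃ j, j < d ∧ d ∣ (k + j) ∧ g (a k) = a j := by
    intro k hk
    have h1 : g (a k) = t^[k] v := by
      show g (s^[k] v) = t^[k] v
      rw [hgconj, hv]
    by_cases hk0 : k = 0
    · subst hk0
      exact ⟨0, hd0, ⟨0, by omega⟩, by rw [ha0, hv]⟩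
    · refine ⟨d - k, by omega, ⟨1, by omega⟩, ?_⟩
      have hc := hcancel k (d - k) v
      rw [show k + (d - k) = d by omega] at hc
      rw [h1, show (v : V) = s^[d] v from hsd.symm]
      exact hc
  have hfa : ∀ k, k < d → ∃ j, j < d ∧ d ∣ (k + j + (d - 1)) ∧ f (a k) = a j := by
    intro k hk
    obtain ⟨j, hj, hjdvd, hjeq⟩ := hga k hk
    have hfs : f (a k) = s (a j) := by
      rw [← hjeq]
      show f (a k) = f (g (g (a k)))
      rw [hg (a k)]
    have hsa : s (a j) = a (j + 1) := by
      show s (s^[j] v) = s^[j + 1] v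
      rw [Function.iterate_succ_apply' s j v]
    by_cases hj1 : j + 1 = d
    · refine ⟨0, hd0, by rw [show k + 0 + (d - 1) = k + j by omega]; exact hjdvd, ?_⟩
      rw [hfs, hsa, hj1, ha0]
      exact hsd
    · refine ⟨j + 1, by omega, ?_, by rw [hfs, hsa]⟩
      have h2 : k + (j + 1) + (d - 1) = (k + j) + d := by omega
      rw [h2]
      exact Nat.dvd_add hjdvd (dvd_refl d)
  set O : Set V := {x | ∃ k, k < d ∧ a k = x} with hO
  have hvO : v ∈ O := ⟨0, hd0, ha0⟩
  have hfO : ∀ x ∈ O, f x ∈ O := by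
    rintro x ⟨k, hk, rfl⟩
    obtain ⟨j, hj, -, hje⟩ := hfa k hk
    exact ⟨j, hj, hje.symm⟩
  have hgO : ∀ x ∈ O, g x ∈ O := by
    rintro x ⟨k, hk, rfl⟩
    obtain ⟨j, hj, -, hje⟩ := hga k hk
    exact ⟨j, hj, hje.symm⟩
  have hgfix : ∀ k, k < d → (g (a k) = a k ↔ d ∣ (k + k)) := by
    intro k hk
    obtain ⟨j, hj, hjdvd, hjeq⟩ := hga k hk
    constructor
    · intro h
      have hkj : k = j := ainj k j hk hj (h.symm.trans hjeq)
      rw [hkj] at hjdvd ⊢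
      exact hjdvd
    · intro h
      have h1 : d ∣ (k - j) := by
        have := Nat.dvd_sub h hjdvd
        rwa [show (k + k) - (k + j) = k - j by omega] at this
      have h2 : d ∣ (j - k) := by
        have := Nat.dvd_sub hjdvd h
        rwa [show (k + j) - (k + k) = j - k by omega] at this
      have e1 : k - j = 0 := Nat.eq_zero_of_dvd_of_lt h1 (by omega)
      have e2 : j - k = 0 := Nat.eq_zero_of_dvd_of_lt h2 (by omega)
      have : j = k := by omega
      rw [hjeq, this]
  have hffix : ∀ k, k < d → (f (a k) = a k ↔ d ∣ (k + k + (d - 1))) := by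
    intro k hk
    obtain ⟨j, hj, hjdvd, hjeq⟩ := hfa k hk
    constructor
    · intro h
      have hkj : k = j := ainj k j hk hj (h.symm.trans hjeq)
      rw [hkj] at hjdvd ⊢
      exact hjdvd
    · intro h
      have h1 : d ∣ (k - j) := by
        have := Nat.dvd_sub h hjdvd
        rwa [show (k + k + (d-1)) - (k + j + (d-1)) = k - j by omega] at this
      have h2 : d ∣ (j - k) := by
        have := Nat.dvd_sub hjdvd h
        rwa [show (k + j + (d-1)) - (k + k + (d-1)) = j - k by omega] at this
      have e1 : k - j = 0 := Nat.eq_zero_of_dvd_of_lt h1 (by omega)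
      have e2 : j - k = 0 := Nat.eq_zero_of_dvd_of_lt h2 (by omega)
      have : j = k := by omega
      rw [hjeq, this]
  refine ⟨O, hvO, hfO, hgO, ?_⟩
  by_cases hpar : d % 2 = 1
  · -- odd case
    left
    by_cases hd1 : d = 1
    · -- d = 1 : O = {v}, f v = v, g v = v
      have hfv : f v = v := by
        have := (hffix 0 hd0).2 (by rw [hd1]; omega)
        rwa [ha0] at this
      refine ⟨v, hfv, ?_, ?_⟩ <;>
      · ext x
        simp only [Set.mem_inter_iff, Set.mem_setOf_eq, Set.mem_singleton_iff, hO]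
        constructor
        · rintro ⟨⟨k, hk, rfl⟩, hx⟩
          have : k = 0 := by omega
          rw [this, ha0]
        · rintro rfl
          exact ⟨⟨0, hd0, ha0⟩, by first | exact hfv | exact hv⟩
    · set k₀ : ℕ := (d + 1) / 2 with hk₀
      have hk₀d : k₀ < d := by omega
      have hk₀sum : k₀ + k₀ + (d - 1) = 2 * d := by omega
      have hk₀dvd : d ∣ (k₀ + k₀ + (d - 1)) := ⟨2, by omega⟩
      have hz := (hffix k₀ hk₀d).2 hk₀dvd
      refine ⟨a k₀, hz, ?_, ?_⟩
      · ext x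
        simp only [Set.mem_inter_iff, Set.mem_setOf_eq, Set.mem_singleton_iff, hO]
        constructor
        · rintro ⟨⟨k, hk, rfl⟩, hfx⟩
          have hkd := (hffix k hk).1 hfx
          have h1 : d ∣ 2 * (k - k₀) := by
            have := Nat.dvd_sub hkd hk₀dvd
            rwa [show (k + k + (d-1)) - (k₀ + k₀ + (d-1)) = 2 * (k - k₀) by omega] at this
          have h2 : d ∣ 2 * (k₀ - k) := by
            have := Nat.dvd_sub hk₀dvd hkd
            rwa [show (k₀ + k₀ + (d-1)) - (k + k + (d-1)) = 2 * (k₀ - k) by omega] at this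
          have e1 : k - k₀ = 0 :=
            Nat.eq_zero_of_dvd_of_lt (odd_dvd_of_dvd_two_mul hpar h1) (by omega)
          have e2 : k₀ - k = 0 :=
            Nat.eq_zero_of_dvd_of_lt (odd_dvd_of_dvd_two_mul hpar h2) (by omega)
          have : k = k₀ := by omega
          rw [this]
        · rintro rfl
          exact ⟨⟨k₀, hk₀d, rfl⟩, hz⟩
      · ext x
        simp only [Set.mem_inter_iff, Set.mem_setOf_eq, Set.mem_singleton_iff, hO]
        constructor
        · rintro ⟨⟨k, hk, rfl⟩, hgx⟩
          have hkd := (hgfix k hk).1 hgx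
          have h1 : d ∣ 2 * k := by rwa [show 2 * k = k + k by omega]
          have e1 : k = 0 :=
            Nat.eq_zero_of_dvd_of_lt (odd_dvd_of_dvd_two_mul hpar h1) (by omega)
          rw [e1, ha0]
        · rintro rfl
          exact ⟨⟨0, hd0, ha0⟩, hv⟩
  · -- even case
    right
    have hdev : d % 2 = 0 := by omega
    have hd2 : 2 ≤ d := by omega
    have hy : g (a (d/2)) = a (d/2) := (hgfix (d/2) (by omega)).2 ⟨1, by omega⟩
    refine ⟨a (d / 2), ?_, hy, ?_, ?_⟩
    · intro h
      rw [← ha0] at h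
      have := ainj (d/2) 0 (by omega) hd0 h
      omega
    · ext x
      simp only [Set.mem_inter_iff, Set.mem_setOf_eq, Set.mem_insert_iff,
        Set.mem_singleton_iff, hO]
      constructor
      · rintro ⟨⟨k, hk, rfl⟩, hgx⟩
        obtain ⟨c, hc⟩ := (hgfix k hk).1 hgx
        have hcases : c = 0 ∨ c = 1 ∨ 2 ≤ c := by omega
        rcases hcases with rfl | rfl | hc2
        · left
          have : k = 0 := by omega
          rw [this, ha0]
        · right
          have : k = d / 2 := by omega
          rw [this]
        · exfalso
          have : d * 2 ≤ d * c := Nat.mul_le_mul_left d hc2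
          omega
      · rintro (rfl | rfl)
        · exact ⟨⟨0, hd0, ha0⟩, hv⟩
        · exact ⟨⟨d/2, by omega, rfl⟩, hy⟩
    · ext x
      simp only [Set.mem_inter_iff, Set.mem_setOf_eq, Set.mem_empty_iff_false, iff_false,
        not_and, hO]
      rintro ⟨k, hk, rfl⟩ hfx
      obtain ⟨c, hc⟩ := (hffix k hk).1 hfx
      have hm : d = 2 * (d / 2) := by omega
      have h2 : d * c = 2 * (d / 2 * c) := by
        conv_lhs => rw [hm]
        ring
      omega

/-- Toggling a pair of matchings along an invariant set. -/
lemma toggle {f g : V → V} (hf : Function.Involutive f) (hg : Function.Involutive g)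
    (O : Set V) (hfO : ∀ x ∈ O, f x ∈ O) (hgO : ∀ x ∈ O, g x ∈ O) :
    ∃ tg : V → V, Function.Involutive tg ∧ (∀ x ∈ O, tg x = f x) ∧ (∀ x ∉ O, tg x = g x) ∧
      msize tg + (O ∩ {x | f x = x}).ncard = msize g + (O ∩ {x | g x = x}).ncard := by
  classical
  have hgc : ∀ x ∉ O, g x ∉ O := fun x hx hgx => hx (by rw [← hg x]; exact hgO _ hgx)
  have hfc : ∀ x ∉ O, f x ∉ O := fun x hx hfx => hx (by rw [← hf x]; exact hfO _ hfx)
  set tg : V → V := fun x => if x ∈ O then f x else g x with htg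
  have htgO : ∀ x ∈ O, tg x = f x := fun x hx => by simp [htg, hx]
  have htgO' : ∀ x ∉ O, tg x = g x := fun x hx => by simp [htg, hx]
  have hinv : Function.Involutive tg := by
    intro x
    by_cases hx : x ∈ O
    · rw [htgO x hx, htgO _ (hfO x hx), hf]
    · rw [htgO' x hx, htgO' _ (hgc x hx), hg]
  refine ⟨tg, hinv, htgO, htgO', ?_⟩
  have hsupp : {x | tg x ≠ x} = (O ∩ {x | f x ≠ x}) ∪ ({x | g x ≠ x} \ O) := by
    ext x
    simp only [Set.mem_setOf_eq, Set.mem_union, Set.mem_inter_iff, Set.mem_diff]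
    by_cases hx : x ∈ O
    · rw [htgO x hx]; tauto
    · rw [htgO' x hx]; tauto
  have e0 : msize tg = (O ∩ {x | f x ≠ x}).ncard + ({x | g x ≠ x} \ O).ncard := by
    rw [msize, hsupp, Set.ncard_union_eq ?_ (Set.toFinite _) (Set.toFinite _)]
    rw [Set.disjoint_left]
    rintro y ⟨hy1, -⟩ ⟨-, hy2⟩
    exact hy2 hy1
  have e1 : (O ∩ {x | f x ≠ x}).ncard + (O ∩ {x | f x = x}).ncard = O.ncard := by
    rw [← Set.ncard_union_eq ?_ (Set.toFinite _) (Set.toFinite _)]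
    · congr 1
      ext y
      by_cases h : f y = y <;> simp [h] <;> tauto
    · rw [Set.disjoint_left]
      rintro y ⟨-, hy1⟩ ⟨-, hy2⟩
      exact hy1 hy2
  have e2 : (O ∩ {x | g x ≠ x}).ncard + (O ∩ {x | g x = x}).ncard = O.ncard := by
    rw [← Set.ncard_union_eq ?_ (Set.toFinite _) (Set.toFinite _)]
    · congr 1
      ext y
      by_cases h : g y = y <;> simp [h] <;> tauto
    · rw [Set.disjoint_left]
      rintro y ⟨-, hy1⟩ ⟨-, hy2⟩
      exact hy1 hy2
  have e3 : ({x | g x ≠ x} \ O).ncard + (O ∩ {x | g x ≠ x}).ncard = msize g := by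
    rw [msize, ← Set.ncard_union_eq ?_ (Set.toFinite _) (Set.toFinite _)]
    · congr 1
      ext y
      by_cases h : y ∈ O <;> simp [h] <;> tauto
    · rw [Set.disjoint_left]
      rintro y ⟨-, hy1⟩ ⟨hy2, -⟩
      exact hy1 hy2
  omega

/-- The graph on `V` whose edges are the edges of `G` inside `D(G)`. -/
def DG (G : SimpleGraph V) : SimpleGraph V where
  Adj x y := G.Adj x y ∧ x ∈ Dv G ∧ y ∈ Dv G
  symm := ⟨by rintro x y ⟨h1, h2, h3⟩; exact ⟨h1.symm, h3, h2⟩⟩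
  loopless := ⟨by rintro x ⟨h1, -, -⟩; exact G.loopless.irrefl x h1⟩

lemma DG_adj {x y : V} : (DG G).Adj x y ↔ G.Adj x y ∧ x ∈ Dv G ∧ y ∈ Dv G := Iff.rfl

/-- At most one exposed vertex of a maximum matching in each component of `G[D]`. -/
lemma uniq_exposed : ∀ (m : V → V), MaxM G m → ∀ u v : V, m u = u → m v = v →
    u ≠ v → ¬ (DG G).Reachable u v := by
  classical
  by_contra hcon
  push_neg at hcon
  obtain ⟨m₀, hm₀, u₀, v₀, hu₀, hv₀, hne₀, hre₀⟩ := hcon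
  set S : Set ℕ := {n | ∃ (m : V → V) (u v : V), MaxM G m ∧ m u = u ∧ m v = v ∧ u ≠ v ∧
    ∃ p : (DG G).Walk u v, p.length = n} with hS
  have hSne : S.Nonempty := by
    obtain ⟨p⟩ := hre₀
    exact ⟨p.length, m₀, u₀, v₀, hm₀, hu₀, hv₀, hne₀, p, rfl⟩
  obtain ⟨m, u, v, hm, hu, hv, hne, p, hp⟩ := Nat.sInf_mem hSne
  set n₀ := sInf S with hn₀
  have hmin : ∀ k ∈ S, n₀ ≤ k := fun k hk => Nat.sInf_le hk
  -- length 0 impossible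
  have hn0 : n₀ ≠ 0 := by
    intro h
    rw [h] at hp
    exact hne (SimpleGraph.Walk.eq_of_length_eq_zero hp)
  -- length 1 : augmenting edge
  have hn1 : n₀ ≠ 1 := by
    intro h1
    cases p with
    | nil => simp at hp; omega
    | cons hadj q =>
      have hq0 : q.length = 0 := by
        simp only [SimpleGraph.Walk.length_cons] at hp
        omega
      have := SimpleGraph.Walk.eq_of_length_eq_zero hq0
      subst this
      obtain ⟨g, hg, hgsize, -⟩ := augment hm.1 hadj.1 hu hv
      have := hm.2 g hg
      omega
  -- length ≥ 2
  cases p with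
  | nil => simp at hp; omega
  | cons hadj q =>
    rename_i w₁
    have hq : q.length = n₀ - 1 := by
      simp only [SimpleGraph.Walk.length_cons] at hp
      omega
    have hn2 : 2 ≤ n₀ := by omega
    have hw₁v : w₁ ≠ v := by
      intro h
      subst h
      have h1 : (1 : ℕ) ∈ S := ⟨m, u, w₁, hm, hu, hv, hne, SimpleGraph.Walk.cons hadj
        SimpleGraph.Walk.nil, by simp⟩
      have := hmin 1 h1
      omega
    have hmw₁ : m w₁ ≠ w₁ := by
      intro h
      have h1 : (n₀ - 1) ∈ S := ⟨m, w₁, v, hm, h, hv, hw₁v, q, hq⟩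
      have := hmin _ h1
      omega
    obtain ⟨nn, hnn, hnw⟩ : w₁ ∈ Dv G := hadj.2.2
    obtain ⟨O, hw₁O, hfO, hgO, hcase⟩ := engine hm.1.1 hnn.1.1 w₁ hnw
    rcases hcase with ⟨z, hz, hOf, hOg⟩ | ⟨y, hyne, hgy, hOg, hOf⟩
    · -- odd case: toggle to tg = nn on O, m off O; same size as m
      obtain ⟨tg, htginv, htgO, htgO', htgsize⟩ := toggle hnn.1.1 hm.1.1 O hgO hfO
      rw [hOg, hOf] at htgsize
      simp only [Set.ncard_singleton] at htgsize
      have htgM : MInv G tg := by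
        refine ⟨htginv, fun x hx => ?_⟩
        by_cases hxO : x ∈ O
        · rw [htgO x hxO] at hx ⊢; exact hnn.1.2 x hx
        · rw [htgO' x hxO] at hx ⊢; exact hm.1.2 x hx
      have htgmax : MaxM G tg := ⟨htgM, fun g hg => by
        have := hm.2 g hg
        omega⟩
      have htgw₁ : tg w₁ = w₁ := by rw [htgO w₁ hw₁O, hnw]
      by_cases huz : u = z
      · -- use pair (w₁, v) at distance n₀ - 1
        have htgv : tg v = v := by
          have hvO : v ∉ O := by
            intro hvO
            have : v ∈ O ∩ {x | m x = x} := ⟨hvO, hv⟩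
            rw [hOf, Set.mem_singleton_iff] at this
            exact hne (huz.trans this.symm)
          rw [htgO' v hvO, hv]
        have h1 : (n₀ - 1) ∈ S := ⟨tg, w₁, v, htgmax, htgw₁, htgv, hw₁v, q, hq⟩
        have := hmin _ h1
        omega
      · -- use pair (u, w₁) at distance 1
        have htgu : tg u = u := by
          have huO : u ∉ O := by
            intro huO
            have : u ∈ O ∩ {x | m x = x} := ⟨huO, hu⟩
            rw [hOf] at this
            exact huz this
          rw [htgO' u huO, hu]
        have huw₁ : u ≠ w₁ := by
          intro h
          rw [← h] at hmw₁
          exact hmw₁ hu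
        have h1 : (1 : ℕ) ∈ S := ⟨tg, u, w₁, htgmax, htgu, htgw₁, huw₁,
          SimpleGraph.Walk.cons hadj SimpleGraph.Walk.nil, by simp⟩
        have := hmin 1 h1
        omega
    · -- even case: toggle to tg = m on O, nn off O; size = msize nn + 2, contradiction
      obtain ⟨tg, htginv, htgO, htgO', htgsize⟩ := toggle hm.1.1 hnn.1.1 O hfO hgO
      rw [hOg, hOf] at htgsize
      rw [Set.ncard_empty, Set.ncard_pair (Ne.symm hyne)] at htgsize
      have htgM : MInv G tg := by
        refine ⟨htginv, fun x hx => ?_⟩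
        by_cases hxO : x ∈ O
        · rw [htgO x hxO] at hx ⊢; exact hm.1.2 x hx
        · rw [htgO' x hxO] at hx ⊢; exact hnn.1.2 x hx
      have h1 := hnn.2 tg htgM
      have h2 := maxM_msize_eq hm hnn
      omega

/-- Delete all edges incident to `a` (keeping the vertex, now isolated). -/
def delI (G : SimpleGraph V) (a : V) : SimpleGraph V where
  Adj x y := G.Adj x y ∧ x ≠ a ∧ y ≠ a
  symm := ⟨by rintro x y ⟨h1, h2, h3⟩; exact ⟨h1.symm, h3, h2⟩⟩
  loopless := ⟨by rintro x ⟨h1, -, -⟩; exact G.loopless.irrefl x h1⟩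

lemma delI_adj {a x y : V} : (delI G a).Adj x y ↔ G.Adj x y ∧ x ≠ a ∧ y ≠ a := Iff.rfl

lemma delI_minv {a : V} {f : V → V} (hf : MInv (delI G a) f) : MInv G f :=
  ⟨hf.1, fun x hx => (hf.2 x hx).1⟩

lemma delI_fix_a {a : V} {f : V → V} (hf : MInv (delI G a) f) : f a = a := by
  by_contra h
  exact (hf.2 a h).2.1 rfl

/-- For `a` covered by all maximum matchings, matchings of `delI G a` lose at least 2. -/
lemma delI_size_le {a : V} (ha : a ∉ Dv G) {m : V → V} (hm : MaxM G m)
    {f : V → V} (hf : MInv (delI G a) f) : msize f + 2 ≤ msize m := by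
  have h1 : msize f ≤ msize m := hm.2 f (delI_minv hf)
  have h2 : msize f ≠ msize m := by
    intro h
    exact ha ⟨f, ⟨delI_minv hf, fun g hg => h ▸ hm.2 g hg⟩, delI_fix_a hf⟩
  have he1 := msize_even f (delI_minv hf)
  have he2 := msize_even m hm.1
  obtain ⟨c1, hc1⟩ := he1
  obtain ⟨c2, hc2⟩ := he2
  omega

/-- Removing the matching edge at `a` from a maximum matching of `G` gives a
maximum matching of `delI G a`. -/
lemma delI_max_of_max {a : V} (ha : a ∉ Dv G) {m : V → V} (hm : MaxM G m) :
    ∃ m₁, MaxM (delI G a) m₁ ∧ msize m₁ + 2 = msize m ∧ m₁ a = a ∧ m₁ (m a) = m a ∧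
      ∀ x, x ≠ a → x ≠ m a → m₁ x = m x := by
  have hma : m a ≠ a := by
    intro h
    exact ha ⟨m, hm, h⟩
  obtain ⟨m₁, hm₁, hsize, hfa, hffa, hoth⟩ := delete_edge hm.1 hma
  have hm₁delI : MInv (delI G a) m₁ := by
    refine ⟨hm₁.1, fun x hx => ?_⟩
    have hxa : x ≠ a := by rintro rfl; exact hx hfa
    have hxma : x ≠ m a := by rintro rfl; exact hx hffa
    rw [hoth x hxa hxma] at hx ⊢
    refine ⟨hm.1.2 x hx, hxa, ?_⟩
    intro h
    exact hxma (by rw [← h, hm.1.1])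
  refine ⟨m₁, ⟨hm₁delI, fun g hg => ?_⟩, hsize, hfa, hffa, hoth⟩
  have := delI_size_le ha hm hg
  omega

/-- The stability lemma: isolating a vertex of `A(G)` leaves `D` unchanged (plus `a`). -/
lemma stability {a u : V} (ha : a ∉ Dv G) (hu : u ∈ Dv G) (hadj : G.Adj a u) :
    Dv (delI G a) = Dv G ∪ {a} := by
  classical
  apply Set.eq_of_subset_of_subset
  · -- hard direction
    rintro v ⟨m, hm, hmv⟩
    by_cases hva : v = a
    · exact Or.inr (hva ▸ rfl)
    left
    by_contra hvG
    obtain ⟨n, hn, hnu⟩ := hu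
    have hnv : n v ≠ v := by
      intro h
      exact hvG ⟨n, hn, h⟩
    -- engine with f := n (missing u), g := m (missing v), base point v
    obtain ⟨O, hvO, hfO, hgO, hcase⟩ := engine hn.1.1 hm.1.1 v hmv
    rcases hcase with ⟨z, hz, hOn, hOm⟩ | ⟨y, hyne, hmy, hOm, hOn⟩
    · -- odd: tg = m on O, n off O has size msize n and misses v
      obtain ⟨tg, htginv, htgO, htgO', htgsize⟩ := toggle hm.1.1 hn.1.1 O hgO hfO
      rw [hOm, hOn] at htgsize
      simp only [Set.ncard_singleton] at htgsize
      have htgM : MInv G tg := by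
        refine ⟨htginv, fun x hx => ?_⟩
        by_cases hxO : x ∈ O
        · rw [htgO x hxO] at hx ⊢; exact (delI_minv hm.1).2 x hx
        · rw [htgO' x hxO] at hx ⊢; exact hn.1.2 x hx
      have htgmax : MaxM G tg := ⟨htgM, fun g hg => by
        have := hn.2 g hg
        omega⟩
      exact hvG ⟨tg, htgmax, by rw [htgO v hvO, hmv]⟩
    · -- even case
      by_cases hya : y = a
      · -- y = a : toggle tg = m on O, n off O, misses v, a, u; add edge au
        subst hya
        have huO : u ∉ O := by
          intro huO
          have : u ∈ O ∩ {x | n x = x} := ⟨huO, hnu⟩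
          rw [hOn] at this
          exact this
        obtain ⟨tg, htginv, htgO, htgO', htgsize⟩ := toggle hm.1.1 hn.1.1 O hgO hfO
        rw [hOm, hOn] at htgsize
        rw [Set.ncard_empty, Set.ncard_pair (Ne.symm hyne)] at htgsize
        have htgM : MInv G tg := by
          refine ⟨htginv, fun x hx => ?_⟩
          by_cases hxO : x ∈ O
          · rw [htgO x hxO] at hx ⊢; exact (delI_minv hm.1).2 x hx
          · rw [htgO' x hxO] at hx ⊢; exact hn.1.2 x hx
        have hyO : y ∈ O := by
          have h1 : y ∈ O ∩ {x | m x = x} := by rw [hOm]; exact Or.inr rfl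
          exact h1.1
        have htga : tg y = y := by rw [htgO y hyO, hmy]
        have htgv : tg v = v := by rw [htgO v hvO, hmv]
        have htgu : tg u = u := by rw [htgO' u huO, hnu]
        obtain ⟨g', hg', hg'size, hg'a, hg'u, hg'oth⟩ := augment htgM hadj htga htgu
        have hg'max : MaxM G g' := ⟨hg', fun g hg => by have := hn.2 g hg; omega⟩
        have hvu : v ≠ u := fun h => hnv (by rw [h]; exact hnu)
        exact hvG ⟨g', hg'max, by rw [hg'oth v hva hvu, htgv]⟩
      · -- y ≠ a : toggle tg = n on O, m off O is a matching of delI G a, too big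
        have haO : a ∉ O := by
          intro haO
          have : a ∈ O ∩ {x | m x = x} := ⟨haO, delI_fix_a hm.1⟩
          rw [hOm] at this
          rcases this with h | h
          · exact hva h.symm
          · exact hya h.symm
        obtain ⟨tg, htginv, htgO, htgO', htgsize⟩ := toggle hn.1.1 hm.1.1 O hfO hgO
        rw [hOn, hOm] at htgsize
        rw [Set.ncard_empty, Set.ncard_pair (Ne.symm hyne)] at htgsize
        have htgM : MInv (delI G a) tg := by
          refine ⟨htginv, fun x hx => ?_⟩
          by_cases hxO : x ∈ O
          · rw [htgO x hxO] at hx ⊢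
            refine ⟨hn.1.2 x hx, ?_, ?_⟩
            · rintro rfl; exact haO hxO
            · intro h; exact haO (h ▸ hfO x hxO)
          · rw [htgO' x hxO] at hx ⊢; exact hm.1.2 x hx
        have := hm.2 tg htgM
        omega
  · -- easy direction
    rintro v (⟨m, hm, hmv⟩ | hva)
    · have hma : m a ≠ a := fun h => ha ⟨m, hm, h⟩
      obtain ⟨m₁, hm₁max, hsize, hfa, hffa, hoth⟩ := delI_max_of_max ha hm
      have hvne_a : v ≠ a := fun h => ha ⟨m, hm, h ▸ hmv⟩
      have hvne_ma : v ≠ m a := by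
        intro h
        rw [h] at hmv
        rw [hm.1.1 a] at hmv
        exact hma (hmv ▸ rfl)
      exact ⟨m₁, hm₁max, by rw [hoth v hvne_a hvne_ma, hmv]⟩
    · obtain ⟨f, hf⟩ := exists_maxM (delI G a)
      exact ⟨f, hf, by rw [Set.mem_singleton_iff] at hva; rw [hva]; exact delI_fix_a hf.1⟩

/-- `A(G)` in involution language. -/
def Av (G : SimpleGraph V) : Set V := {v | v ∉ Dv G ∧ ∃ w ∈ Dv G, G.Adj v w}

lemma DG_walk_mem {H : SimpleGraph V} : ∀ {x y : V}, (DG H).Walk x y → x ∈ Dv H → y ∈ Dv H := by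
  intro x y p
  induction p with
  | nil => exact id
  | cons h q ih => exact fun _ => ih h.2.2

lemma DG_reachable_mem {H : SimpleGraph V} {x y : V} (h : (DG H).Reachable x y)
    (hx : x ∈ Dv H) : y ∈ Dv H := by
  obtain ⟨p⟩ := h
  exact DG_walk_mem p hx

lemma delI_DG_eq {H : SimpleGraph V} {a u : V} (ha : a ∉ Dv H) (hu : u ∈ Dv H)
    (hadj : H.Adj a u) : DG (delI H a) = DG H := by
  have hDva := stability ha hu hadj
  ext x y
  rw [DG_adj, DG_adj, delI_adj, hDva]
  constructor
  · rintro ⟨⟨h1, h2, h3⟩, h4, h5⟩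
    refine ⟨h1, ?_, ?_⟩
    · rcases h4 with h | h
      · exact h
      · exact absurd h h2
    · rcases h5 with h | h
      · exact h
      · exact absurd h h3
  · rintro ⟨h1, h2, h3⟩
    exact ⟨⟨h1, fun h => ha (h ▸ h2), fun h => ha (h ▸ h3)⟩, Or.inl h2, Or.inl h3⟩

lemma delI_Av_eq {H : SimpleGraph V} {a u : V} (ha : a ∉ Dv H) (hu : u ∈ Dv H)
    (hadj : H.Adj a u) : Av (delI H a) = Av H \ {a} := by
  have hDva := stability ha hu hadj
  ext x
  simp only [Av, Set.mem_setOf_eq, Set.mem_diff, Set.mem_singleton_iff, hDva]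
  constructor
  · rintro ⟨h1, w, hw, hadj'⟩
    have hxa : x ≠ a := fun h => h1 (Or.inr (h ▸ rfl))
    have hwa : w ≠ a := hadj'.2.2
    have hwD : w ∈ Dv H := by
      rcases hw with h | h; exact h; exact absurd h hwa
    exact ⟨⟨fun h => h1 (Or.inl h), w, hwD, hadj'.1⟩, hxa⟩
  · rintro ⟨⟨h1, w, hw, hadj'⟩, hxa⟩
    have hwa : w ≠ a := fun h => ha (h ▸ hw)
    refine ⟨?_, w, Or.inl hw, hadj', hxa, hwa⟩
    rintro (h | h)
    · exact h1 h
    · exact hxa h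

/-- The core theorem, proven by induction on the size of `A(G)`. -/
lemma core : ∀ (N : ℕ) (H : SimpleGraph V), (Av H).ncard = N → ∀ m, MaxM H m →
    ∀ v₀ ∈ Dv H, ∃! v : V, v ∈ Dv H ∧ (DG H).Reachable v₀ v ∧ (m v = v ∨ m v ∉ Dv H) := by
  classical
  intro N
  induction N using Nat.strong_induction_on with
  | _ N ih =>
  intro H hN m hm v₀ hv₀
  by_cases hA : (Av H).Nonempty
  · -- inductive step
    obtain ⟨a, haA⟩ := hA
    obtain ⟨ha, u, hu, hau⟩ := haA
    have hDva := stability ha hu hau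
    have hDGeq := delI_DG_eq ha hu hau
    have hAveq := delI_Av_eq ha hu hau
    have hlt : (Av (delI H a)).ncard < N := by
      rw [hAveq, ← hN]
      exact Set.ncard_diff_singleton_lt_of_mem ⟨ha, u, hu, hau⟩ (Set.toFinite _)
    obtain ⟨m₁, hm₁max, hsize, hm₁a, hm₁ma, hoth⟩ := delI_max_of_max ha hm
    have hv₀' : v₀ ∈ Dv (delI H a) := by rw [hDva]; exact Or.inl hv₀
    have hcore := ih _ hlt (delI H a) rfl m₁ hm₁max v₀ hv₀'
    rw [hDGeq, hDva] at hcore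
    refine (existsUnique_congr fun v => ?_).1 hcore
    constructor
    · rintro ⟨hv1, hv2, hv3⟩
      have hvD : v ∈ Dv H := DG_reachable_mem hv2 hv₀
      refine ⟨hvD, hv2, ?_⟩
      by_cases hvma : v = m a
      · -- v = m a : m v = a ∉ Dv H
        right
        have : m v = a := by rw [hvma, hm.1.1]
        rw [this]
        exact ha
      · have hva : v ≠ a := fun h => ha (h ▸ hvD)
        rw [hoth v hva hvma] at hv3
        rcases hv3 with h | h
        · exact Or.inl h
        · right
          intro hmem
          exact h (Or.inl hmem)
    · rintro ⟨hv1, hv2, hv3⟩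
      refine ⟨Or.inl hv1, hv2, ?_⟩
      by_cases hvma : v = m a
      · left
        rw [hvma]
        exact hm₁ma
      · have hva : v ≠ a := fun h => ha (h ▸ hv1)
        rw [hoth v hva hvma]
        rcases hv3 with h | h
        · exact Or.inl h
        · right
          rintro (hmem | hmem)
          · exact h hmem
          · -- m v = a would force v = m a
            exact hvma (by rw [← hmem, hm.1.1])
  · -- base case : Av H = ∅
    have hAe : Av H = ∅ := Set.not_nonempty_iff_eq_empty.1 hA
    have hclosed : ∀ x ∈ Dv H, ∀ w, H.Adj x w → w ∈ Dv H := by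
      intro x hx w hxw
      by_contra hw
      have : w ∈ Av H := ⟨hw, x, hx, hxw.symm⟩
      rw [hAe] at this
      exact this
    set C : Set V := {x | x ∈ Dv H ∧ (DG H).Reachable v₀ x} with hC
    have hCm : ∀ x ∈ C, m x ∈ C := by
      rintro x ⟨hx1, hx2⟩
      by_cases h : m x = x
      · rw [h]; exact ⟨hx1, hx2⟩
      · have hadj : H.Adj x (m x) := hm.1.2 x h
        have hmD : m x ∈ Dv H := hclosed x hx1 _ hadj
        exact ⟨hmD, hx2.trans (SimpleGraph.Adj.reachable ⟨hadj, hx1, hmD⟩)⟩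
    obtain ⟨nn, hnn, hnv₀⟩ := hv₀
    have hv₀D : v₀ ∈ Dv H := ⟨nn, hnn, hnv₀⟩
    have hCn : ∀ x ∈ C, nn x ∈ C := by
      rintro x ⟨hx1, hx2⟩
      by_cases h : nn x = x
      · rw [h]; exact ⟨hx1, hx2⟩
      · have hadj : H.Adj x (nn x) := hnn.1.2 x h
        have hmD : nn x ∈ Dv H := hclosed x hx1 _ hadj
        exact ⟨hmD, hx2.trans (SimpleGraph.Adj.reachable ⟨hadj, hx1, hmD⟩)⟩
    have hCfix_n : C ∩ {x | nn x = x} = {v₀} := by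
      ext x
      simp only [Set.mem_inter_iff, Set.mem_setOf_eq, Set.mem_singleton_iff, hC]
      constructor
      · rintro ⟨⟨hx1, hx2⟩, hx3⟩
        by_contra hne
        exact uniq_exposed nn hnn x v₀ hx3 hnv₀ hne hx2.symm
      · intro hx
        rw [hx]
        exact ⟨⟨hv₀D, SimpleGraph.Reachable.refl _⟩, hnv₀⟩
    have hpar_m := parity_invariant m hm.1.1 C hCm
    have hpar_n := parity_invariant nn hnn.1.1 C hCn
    rw [hCfix_n, Set.ncard_singleton] at hpar_n
    have hfix_m_ne : (C ∩ {x | m x = x}).Nonempty := by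
      rw [← Set.ncard_pos (Set.toFinite _)]
      omega
    obtain ⟨v, hvC, hvm⟩ := hfix_m_ne
    refine ⟨v, ⟨hvC.1, hvC.2, Or.inl hvm⟩, ?_⟩
    rintro v' ⟨hv'D, hv'r, hv'3⟩
    have hv'm : m v' = v' := by
      rcases hv'3 with h | h
      · exact h
      · exfalso
        have hne : m v' ≠ v' := fun hh => h (by rw [hh]; exact hv'D)
        exact h (hclosed v' hv'D _ (hm.1.2 v' hne))
    by_contra hne
    exact uniq_exposed m hm v' v hv'm hvm hne (hv'r.symm.trans hvC.2)

lemma mem_Dv_iff {x : V} : x ∈ Dv G ↔ x ∈ Dset G := by rw [Dv_eq_Dset]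

lemma induce_reachable_iff {x y : ↥(Dset G)} :
    (G.induce (Dset G)).Reachable x y ↔ (DG G).Reachable ↑x ↑y := by
  constructor
  · intro h
    refine h.map ⟨Subtype.val, ?_⟩
    intro a b hab
    exact ⟨hab, mem_Dv_iff.2 a.2, mem_Dv_iff.2 b.2⟩
  · intro h
    obtain ⟨p⟩ := h
    have key : ∀ {pp qq : V} (w : (DG G).Walk pp qq) (hp : pp ∈ Dset G) (hq : qq ∈ Dset G),
        (G.induce (Dset G)).Reachable ⟨pp, hp⟩ ⟨qq, hq⟩ := by
      intro pp qq w
      induction w with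
      | nil =>
        intro hp hq
        exact SimpleGraph.Reachable.refl _
      | cons hadj q ihq =>
        intro hp hq
        have hw : _ ∈ Dset G := mem_Dv_iff.1 hadj.2.2
        have h1 : (G.induce (Dset G)).Adj ⟨_, hp⟩ ⟨_, hw⟩ := hadj.1
        exact (h1.reachable).trans (ihq hw hq)
    exact key p x.2 y.2

theorem gallaiEdmonds_main {V : Type*} [Fintype V]
    (G : SimpleGraph V) (M : G.Subgraph) (hM : IsMaximumMatching G M)
    (K : (G.induce (Dset G)).ConnectedComponent) :
    (∃! v : Dset G, v ∈ K.supp ∧ ¬ ∃ w : Dset G, w ∈ K.supp ∧ M.Adj ↑v ↑w) ∧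
    (∀ v : Dset G, (v ∈ K.supp ∧ ¬ ∃ w : Dset G, w ∈ K.supp ∧ M.Adj ↑v ↑w) →
      ((v : V) ∉ M.verts ∨ ∃ a ∈ Aset G, M.Adj ↑v a)) := by
  classical
  set m : V → V := pf M hM.1 with hmdef
  have hmmax : MaxM G m := maxM_pf hM
  obtain ⟨v₀, hv₀K⟩ := K.exists_rep
  have hv₀K' : (G.induce (Dset G)).connectedComponentMk v₀ = K := hv₀K
  have hv₀Dv : (v₀ : V) ∈ Dv G := mem_Dv_iff.2 v₀.2
  have hsupp_iff : ∀ v : ↥(Dset G), v ∈ K.supp ↔ (DG G).Reachable ↑v₀ ↑v := by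
    intro v
    rw [SimpleGraph.ConnectedComponent.mem_supp_iff, ← hv₀K',
      SimpleGraph.ConnectedComponent.eq]
    rw [induce_reachable_iff]
    exact ⟨fun h => h.symm, fun h => h.symm⟩
  have hinner_iff : ∀ v : ↥(Dset G), v ∈ K.supp →
      ((¬ ∃ w : ↥(Dset G), w ∈ K.supp ∧ M.Adj ↑v ↑w) ↔ (m ↑v = ↑v ∨ m ↑v ∉ Dv G)) := by
    intro v hvK
    constructor
    · intro hno
      by_cases hfix : m ↑v = ↑v
      · exact Or.inl hfix
      right
      intro hmem
      have hvverts : (v : V) ∈ M.verts := by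
        by_contra h
        exact hfix ((pf_fix_iff hM.1).2 h)
      have hMadj : M.Adj ↑v (m ↑v) := pf_adj hM.1 hvverts
      have hmDset : m ↑v ∈ Dset G := mem_Dv_iff.1 hmem
      refine hno ⟨⟨m ↑v, hmDset⟩, (hsupp_iff _).2 ?_, hMadj⟩
      refine ((hsupp_iff v).1 hvK).trans (SimpleGraph.Adj.reachable ?_)
      exact ⟨M.adj_sub hMadj, mem_Dv_iff.2 v.2, hmem⟩
    · rintro hor ⟨w, hwK, hadj⟩
      have hmv : m ↑v = ↑w := pf_eq_of_adj hM.1 hadj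
      rcases hor with h | h
      · rw [h] at hmv
        exact (M.adj_sub hadj).ne (hmv ▸ rfl)
      · rw [hmv] at h
        exact h (mem_Dv_iff.2 w.2)
  have hcore := core (Av G).ncard G rfl m hmmax ↑v₀ hv₀Dv
  constructor
  · obtain ⟨v, ⟨hv1, hv2, hv3⟩, huniq⟩ := hcore
    have hvDset : v ∈ Dset G := mem_Dv_iff.1 hv1
    have hvK : (⟨v, hvDset⟩ : ↥(Dset G)) ∈ K.supp := (hsupp_iff _).2 hv2
    refine ⟨⟨v, hvDset⟩, ⟨hvK, (hinner_iff ⟨v, hvDset⟩ hvK).2 hv3⟩, ?_⟩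
    rintro v' ⟨hv'K, hv'inner⟩
    have h3 := (hinner_iff v' hv'K).1 hv'inner
    have h2 := (hsupp_iff v').1 hv'K
    have h1 : (v' : V) ∈ Dv G := mem_Dv_iff.2 v'.2
    exact Subtype.ext (huniq ↑v' ⟨h1, h2, h3⟩)
  · rintro v ⟨hvK, hvinner⟩
    have h3 := (hinner_iff v hvK).1 hvinner
    rcases h3 with h | h
    · left
      exact (pf_fix_iff hM.1).1 h
    · right
      have hfix : m ↑v ≠ ↑v := fun hh => h (by rw [hh]; exact mem_Dv_iff.2 v.2)
      have hvverts : (v : V) ∈ M.verts := by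
        by_contra hc
        exact hfix ((pf_fix_iff hM.1).2 hc)
      have hMadj : M.Adj ↑v (m ↑v) := pf_adj hM.1 hvverts
      have hmnD : m ↑v ∉ Dset G := fun hc => h (mem_Dv_iff.2 hc)
      exact ⟨m ↑v, ⟨hmnD, ↑v, v.2, (M.adj_sub hMadj).symm⟩, hMadj⟩

end GEaux

/-- For every finite graph `G`, every maximum matching `M` of `G`, and every
connected component `K` of the subgraph induced on `D(G)`, exactly one vertex of
`K` is not matched by `M` to another vertex of `K`; moreover that vertex is
either unmatched by `M` or matched by `M` to a vertex of `A(G)`.  Hence the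
restriction of `M` to `K` is a near-perfect matching of `K`. -/
theorem gallaiEdmonds_D_components_nearPerfect {V : Type*} [Fintype V]
    (G : SimpleGraph V) (M : G.Subgraph) (hM : IsMaximumMatching G M)
    (K : (G.induce (Dset G)).ConnectedComponent) :
    (∃! v : Dset G, v ∈ K.supp ∧ ¬ ∃ w : Dset G, w ∈ K.supp ∧ M.Adj ↑v ↑w) ∧
    (∀ v : Dset G, (v ∈ K.supp ∧ ¬ ∃ w : Dset G, w ∈ K.supp ∧ M.Adj ↑v ↑w) →
      ((v : V) ∉ M.verts ∨ ∃ a ∈ Aset G, M.Adj ↑v a)) :=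
  GEaux.gallaiEdmonds_main G M hM K
end

section
/- For every finite graph G and every maximum matching M of G: every vertex of A(G) is matched by M to a vertex of D(G), and distinct vertices of A(G) are matched by M to vertices lying in distinct connected components of the subgraph induced on D(G). -/
set_option linter.unusedSectionVars false
set_option maxHeartbeats 1600000

open SimpleGraph Set

namespace GE

variable {V : Type*} [Fintype V] {G : SimpleGraph V}

omit [Fintype V] in
lemma matching_unique {M : G.Subgraph} (hM : M.IsMatching) {v w w' : V}
    (h : M.Adj v w) (h' : M.Adj v w') : w = w' :=
  ((hM (M.edge_vert h)).unique h h')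

omit [Fintype V] in
lemma adj_ne {M : G.Subgraph} {u v : V} (h : M.Adj u v) : u ≠ v :=
  (M.adj_sub h).ne

/-- Delete one edge of a matching. -/
lemma del_edge {M : G.Subgraph} (hM : M.IsMatching) {u v : V} (huv : M.Adj u v) :
    ∃ M₁ : G.Subgraph, M₁.IsMatching ∧ M₁.verts = M.verts \ {u, v} ∧
      M₁.edgeSet = M.edgeSet \ {s(u, v)} ∧
      M₁.edgeSet.ncard = M.edgeSet.ncard - 1 := by
  let M₁ : G.Subgraph :=
    { verts := M.verts \ {u, v}
      Adj := fun p q => M.Adj p q ∧ s(p, q) ≠ s(u, v)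
      adj_sub := fun h => M.adj_sub h.1
      edge_vert := by
        rintro p q ⟨h, hne'⟩
        refine ⟨M.edge_vert h, ?_⟩
        simp only [Set.mem_insert_iff, Set.mem_singleton_iff]
        rintro (rfl | rfl)
        · exact hne' (by rw [matching_unique hM h huv])
        · exact hne' (by rw [matching_unique hM h huv.symm, Sym2.eq_swap])
      symm := by
        constructor
        rintro p q ⟨h, hne'⟩
        exact ⟨h.symm, by rwa [Sym2.eq_swap]⟩ }
  have hE : M₁.edgeSet = M.edgeSet \ {s(u, v)} := by
    ext e
    induction e with
    | _ p q => simp [M₁, Subgraph.mem_edgeSet, Set.mem_diff]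
  refine ⟨M₁, ?_, rfl, hE, ?_⟩
  · rintro w ⟨hw, hw2⟩
    obtain ⟨p, hp, hpu⟩ := hM hw
    simp only [Set.mem_insert_iff, Set.mem_singleton_iff] at hw2
    push_neg at hw2
    refine ⟨p, ⟨hp, ?_⟩, ?_⟩
    · intro heq
      rw [Sym2.eq_iff] at heq
      rcases heq with ⟨h1, _⟩ | ⟨h1, _⟩
      · exact hw2.1 h1
      · exact hw2.2 h1
    · rintro q ⟨hq, _⟩
      exact hpu q hq
  · rw [hE]
    exact Set.ncard_diff_singleton_of_mem (show s(u, v) ∈ M.edgeSet from huv)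

/-- Add an edge joining two exposed vertices. -/
lemma add_edge {M : G.Subgraph} (hM : M.IsMatching) {u v : V} (huv : G.Adj u v)
    (hu : u ∉ M.verts) (hv : v ∉ M.verts) :
    ∃ M₁ : G.Subgraph, M₁.IsMatching ∧ M₁.verts = M.verts ∪ {u, v} ∧
      M₁.edgeSet = insert s(u, v) M.edgeSet ∧
      M₁.edgeSet.ncard = M.edgeSet.ncard + 1 := by
  have hne : u ≠ v := huv.ne
  let M₁ : G.Subgraph :=
    { verts := M.verts ∪ {u, v}
      Adj := fun p q => M.Adj p q ∨ s(p, q) = s(u, v)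
      adj_sub := by
        rintro p q (h | h)
        · exact M.adj_sub h
        · rw [Sym2.eq_iff] at h
          rcases h with ⟨rfl, rfl⟩ | ⟨rfl, rfl⟩
          · exact huv
          · exact huv.symm
      edge_vert := by
        rintro p q (h | h)
        · exact Or.inl (M.edge_vert h)
        · rw [Sym2.eq_iff] at h
          rcases h with ⟨rfl, _⟩ | ⟨rfl, _⟩
          · exact Or.inr (Or.inl rfl)
          · exact Or.inr (Or.inr rfl)
      symm := by
        constructor
        rintro p q (h | h)
        · exact Or.inl h.symm
        · exact Or.inr (by rwa [Sym2.eq_swap]) }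
  have hE : M₁.edgeSet = insert s(u, v) M.edgeSet := by
    ext e
    induction e with
    | _ p q =>
      simp only [M₁, Subgraph.mem_edgeSet, Set.mem_insert_iff]
      tauto
  refine ⟨M₁, ?_, rfl, hE, ?_⟩
  · rintro w (hw | hw)
    · obtain ⟨p, hp, hpu⟩ := hM hw
      refine ⟨p, Or.inl hp, ?_⟩
      rintro q (hq | hq)
      · exact hpu q hq
      · rw [Sym2.eq_iff] at hq
        rcases hq with ⟨rfl, _⟩ | ⟨rfl, _⟩
        · exact absurd hw hu
        · exact absurd hw hv
    · simp only [Set.mem_insert_iff, Set.mem_singleton_iff] at hw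
      rcases hw with rfl | rfl
      · refine ⟨v, Or.inr rfl, ?_⟩
        rintro q (hq | hq)
        · exact absurd (M.edge_vert hq) hu
        · rw [Sym2.eq_iff] at hq
          rcases hq with ⟨_, rfl⟩ | ⟨rfl, h2⟩
          · rfl
          · exact absurd rfl hne
      · refine ⟨u, Or.inr (by rw [Sym2.eq_swap]), ?_⟩
        rintro q (hq | hq)
        · exact absurd (M.edge_vert hq) hv
        · rw [Sym2.eq_iff] at hq
          rcases hq with ⟨rfl, _⟩ | ⟨_, rfl⟩
          · exact absurd rfl hne
          · rfl
  · rw [hE]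
    refine Set.ncard_insert_of_notMem ?_ (Set.toFinite _)
    intro hmem
    exact hu (M.edge_vert hmem)

/-- Rotation: move the "hole" of a matching along an edge. -/
lemma rot {M : G.Subgraph} (hM : M.IsMatching) {h y z : V} (hh : h ∉ M.verts)
    (hGhy : G.Adj h y) (hyz : M.Adj y z) :
    ∃ M₁ : G.Subgraph, M₁.IsMatching ∧ M₁.verts = insert h M.verts \ {z} ∧
      M₁.edgeSet = insert s(h, y) (M.edgeSet \ {s(y, z)}) ∧
      M₁.edgeSet.ncard = M.edgeSet.ncard := by
  obtain ⟨M₂, hM₂, hV₂, hE₂, hc₂⟩ := del_edge hM hyz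
  have hy : y ∈ M.verts := M.edge_vert hyz
  have hz : z ∈ M.verts := M.edge_vert hyz.symm
  have hhy : h ≠ y := fun e => hh (e ▸ hy)
  have hhz : h ≠ z := fun e => hh (e ▸ hz)
  have hyzne : y ≠ z := adj_ne hyz
  obtain ⟨M₃, hM₃, hV₃, hE₃, hc₃⟩ := add_edge hM₂ hGhy
    (by rw [hV₂]; rintro ⟨hmem, _⟩; exact hh hmem)
    (by rw [hV₂]; rintro ⟨_, hmem⟩; exact hmem (Or.inl rfl))
  refine ⟨M₃, hM₃, ?_, ?_, ?_⟩
  · rw [hV₃, hV₂]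
    ext w
    simp only [Set.mem_union, Set.mem_diff, Set.mem_insert_iff, Set.mem_singleton_iff]
    constructor
    · rintro (⟨hw, hw2⟩ | (rfl | rfl))
      · push_neg at hw2; exact ⟨Or.inr hw, hw2.2⟩
      · exact ⟨Or.inl rfl, hhz⟩
      · exact ⟨Or.inr hy, hyzne⟩
    · rintro ⟨(rfl | hw), hw2⟩
      · exact Or.inr (Or.inl rfl)
      · by_cases hwy : w = y
        · exact Or.inr (Or.inr hwy)
        · exact Or.inl ⟨hw, by push_neg; exact ⟨hwy, hw2⟩⟩
  · rw [hE₃, hE₂]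
  · rw [hc₃, hc₂]
    have : s(y, z) ∈ M.edgeSet := hyz
    have hpos : 0 < M.edgeSet.ncard := (Set.ncard_pos (Set.toFinite _)).mpr ⟨_, this⟩
    omega

/-- Shift: move the hole of a matching along an alternating sequence. -/
lemma shift {N : G.Subgraph} (hN : N.IsMatching) (k : ℕ) (z : ℕ → V)
    (hinj : Set.InjOn z {i | i ≤ 2*k})
    (hz0 : z 0 ∉ N.verts)
    (hGadj : ∀ i < k, G.Adj (z (2*i)) (z (2*i+1)))
    (hNadj : ∀ i < k, N.Adj (z (2*i+1)) (z (2*i+2))) :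
    ∃ N' : G.Subgraph, N'.IsMatching ∧
      N'.verts = insert (z 0) N.verts \ {z (2*k)} ∧
      N'.edgeSet = (N.edgeSet \ {e | ∃ i < k, e = s(z (2*i+1), z (2*i+2))})
          ∪ {e | ∃ i < k, e = s(z (2*i), z (2*i+1))} ∧
      N'.edgeSet.ncard = N.edgeSet.ncard := by
  induction k with
  | zero =>
    refine ⟨N, hN, ?_, ?_, rfl⟩
    · rw [Set.insert_diff_of_mem _ (rfl : z 0 ∈ {z (2*0)})]
      rw [Set.diff_singleton_eq_self (by simpa using hz0)]
    · simp
  | succ k ih =>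
    have hsub : {i : ℕ | i ≤ 2*k} ⊆ {i | i ≤ 2*(k+1)} := fun i hi => by
      simp only [Set.mem_setOf_eq] at *; omega
    have hne : ∀ i j : ℕ, i ≤ 2*(k+1) → j ≤ 2*(k+1) → i ≠ j → z i ≠ z j :=
      fun i j hi hj hij e => hij (hinj hi hj e)
    obtain ⟨N₁, hN₁, hV₁, hE₁, hc₁⟩ := ih (hinj.mono hsub)
      (fun i hi => hGadj i (by omega)) (fun i hi => hNadj i (by omega))
    have hadj : N₁.Adj (z (2*k+1)) (z (2*k+2)) := by
      rw [← Subgraph.mem_edgeSet, hE₁]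
      left
      refine ⟨hNadj k (by omega), ?_⟩
      rintro ⟨i, hik, heq⟩
      rw [Sym2.eq_iff] at heq
      rcases heq with ⟨h1, _⟩ | ⟨h1, _⟩
      · exact hne _ _ (by omega) (by omega) (by omega) h1.symm
      · exact hne _ _ (by omega) (by omega) (by omega) h1.symm
    have hhole : z (2*k) ∉ N₁.verts := by
      rw [hV₁]; rintro ⟨_, hmem⟩; exact hmem rfl
    obtain ⟨N₂, hN₂, hV₂, hE₂, hc₂⟩ := rot hN₁ hhole (hGadj k (by omega)) hadj
    have h2k_mem : z (2*k) ∈ insert (z 0) N.verts := by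
      rcases Nat.eq_zero_or_pos k with rfl | hk
      · exact Or.inl rfl
      · right
        have := hNadj (k-1) (by omega)
        have h2 : 2*(k-1)+2 = 2*k := by omega
        rw [h2] at this
        exact N.edge_vert this.symm
    refine ⟨N₂, hN₂, ?_, ?_, by rw [hc₂, hc₁]⟩
    · rw [hV₂, hV₁, Set.insert_diff_singleton, Set.insert_eq_self.mpr h2k_mem]
      have : (2:ℕ)*k+2 = 2*(k+1) := by omega
      rw [this]
    · rw [hE₂, hE₁]
      have hremfresh : ∀ i < k, s(z (2*i), z (2*i+1)) ≠ s(z (2*k+1), z (2*k+2)) := by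
        intro i hik heq
        rw [Sym2.eq_iff] at heq
        rcases heq with ⟨h1, _⟩ | ⟨h1, _⟩
        · exact hne _ _ (by omega) (by omega) (by omega) h1
        · exact hne _ _ (by omega) (by omega) (by omega) h1
      ext e
      simp only [Set.mem_insert_iff, Set.mem_union, Set.mem_diff, Set.mem_setOf_eq,
        Set.mem_singleton_iff]
      constructor
      · rintro (rfl | ⟨(⟨heN, hrem⟩ | ⟨i, hik, rfl⟩), hne2⟩)
        · right; exact ⟨k, by omega, rfl⟩
        · left
          refine ⟨heN, ?_⟩
          rintro ⟨i, hik, rfl⟩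
          rcases Nat.lt_succ_iff_lt_or_eq.mp hik with h | rfl
          · exact hrem ⟨i, h, rfl⟩
          · exact hne2 rfl
        · right; exact ⟨i, by omega, rfl⟩
      · rintro (⟨heN, hrem⟩ | ⟨i, hik, rfl⟩)
        · right
          refine ⟨Or.inl ⟨heN, ?_⟩, ?_⟩
          · rintro ⟨i, hik, rfl⟩
            exact hrem ⟨i, by omega, rfl⟩
          · intro h
            exact hrem ⟨k, by omega, h⟩
        · rcases Nat.lt_succ_iff_lt_or_eq.mp hik with h | rfl
          · right
            exact ⟨Or.inr ⟨i, h, rfl⟩, hremfresh i h⟩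
          · left; rfl
lemma forced_walk {P Q : G.Subgraph} (hP : P.IsMatching) (hQ : Q.IsMatching) {u : V}
    (huP : u ∈ P.verts) (huQ : u ∉ Q.verts) :
    ∃ (m : ℕ) (x : ℕ → V), 0 < m ∧ x 0 = u ∧
      (∀ i < m, (Even i → P.Adj (x i) (x (i+1))) ∧ (¬Even i → Q.Adj (x i) (x (i+1)))) ∧
      Set.InjOn x {i | i ≤ m} ∧
      ((¬Even m ∧ x m ∉ Q.verts) ∨ (Even m ∧ x m ∉ P.verts)) := by
  classical
  set S : Set ℕ := {m | ∃ x : ℕ → V, x 0 = u ∧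
      (∀ i < m, (Even i → P.Adj (x i) (x (i+1))) ∧ (¬Even i → Q.Adj (x i) (x (i+1)))) ∧
      Set.InjOn x {i | i ≤ m}} with hS
  have hbound : ∀ m ∈ S, m ≤ Fintype.card V := by
    rintro m ⟨x, -, -, hinj⟩
    have h1 : {i : ℕ | i ≤ m} = ↑(Finset.Iic m) := by ext i; simp
    have h2 : ({i : ℕ | i ≤ m}).ncard ≤ (Set.univ : Set V).ncard :=
      Set.ncard_le_ncard_of_injOn x (fun a _ => Set.mem_univ _) hinj (Set.toFinite _)
    rw [h1, Set.ncard_coe_finset, Nat.card_Iic, Set.ncard_univ, Nat.card_eq_fintype_card] at h2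
    omega
  obtain ⟨p1, hp1, hp1u⟩ := hP huP
  have h1S : 1 ∈ S := by
    refine ⟨fun i => if i = 0 then u else p1, rfl, ?_, ?_⟩
    · intro i hi
      interval_cases i
      exact ⟨fun _ => by simpa using hp1, fun h => absurd Even.zero h⟩
    · intro i hi j hj hij
      simp only [Set.mem_setOf_eq] at hi hj
      interval_cases i <;> interval_cases j
      · rfl
      · exact absurd (show u = p1 by simpa using hij) (adj_ne hp1)
      · exact absurd (show u = p1 by simpa using hij.symm) (adj_ne hp1)
      · rfl
  have hSne : S.Nonempty := ⟨1, h1S⟩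
  have hSbdd : BddAbove S := ⟨Fintype.card V, fun m hm => hbound m hm⟩
  set m := sSup S with hm
  have hmS : m ∈ S := Nat.sSup_mem hSne hSbdd
  have hm1 : 1 ≤ m := le_csSup hSbdd h1S
  obtain ⟨x, hx0, hchain, hinj⟩ := hmS
  refine ⟨m, x, by omega, hx0, hchain, hinj, ?_⟩
  by_contra hterm
  push_neg at hterm
  rcases Nat.even_or_odd m with hev | hod
  · -- m even: extend with P-partner of x m
    have hxmP : x m ∈ P.verts := hterm.2 hev
    obtain ⟨p, hp, hpu⟩ := hP hxmP
    have hfresh : ∀ j ≤ m, x j ≠ p := by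
      intro j hj heq
      rcases Nat.eq_zero_or_pos j with rfl | hjpos
      · have h01 : P.Adj (x 0) (x 1) := (hchain 0 (by omega)).1 Even.zero
        have hx1m : x 1 = x m := matching_unique hP h01 (heq ▸ hp.symm)
        have := hinj (by simp only [Set.mem_setOf_eq]; omega : (1:ℕ) ∈ {i | i ≤ m})
          (by simp : m ∈ {i | i ≤ m}) hx1m
        rcases hev with ⟨c, hc⟩; omega
      · rcases eq_or_lt_of_le hj with rfl | hlt
        · exact adj_ne hp (heq ▸ rfl)
        · rcases Nat.even_or_odd j with hjev | hjod
          · have hedge : P.Adj (x j) (x (j+1)) := (hchain j hlt).1 hjev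
            have h2 : x (j+1) = x m := matching_unique hP (heq ▸ hedge) hp.symm
            have := hinj (by simp only [Set.mem_setOf_eq]; omega : j+1 ∈ {i | i ≤ m})
              (by simp : m ∈ {i | i ≤ m}) h2
            rcases hev with ⟨c, hc⟩; rcases hjev with ⟨d, hd⟩; omega
          · have hev' : Even (j-1) := by rcases hjod with ⟨c, hc⟩; exact ⟨c, by omega⟩
            have hedge : P.Adj (x (j-1)) (x (j-1+1)) := (hchain (j-1) (by omega)).1 hev'
            rw [(by omega : j - 1 + 1 = j)] at hedge
            have h2 : x (j-1) = x m := matching_unique hP (heq ▸ hedge.symm) hp.symm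
            have := hinj (by simp only [Set.mem_setOf_eq]; omega : j-1 ∈ {i | i ≤ m})
              (by simp : m ∈ {i | i ≤ m}) h2
            omega
    have hmem : m + 1 ∈ S := by
      set xe : ℕ → V := fun i => if i = m+1 then p else x i with hxe
      have hxe_lt : ∀ i, i ≤ m → xe i = x i := by
        intro i hi
        have hine : i ≠ m+1 := by omega
        simp only [hxe, if_neg hine]
      have hxe_top : xe (m+1) = p := by simp only [hxe, if_pos rfl]
      refine ⟨xe, by rw [hxe_lt 0 (by omega)]; exact hx0, ?_, ?_⟩
      · intro i hi
        rcases Nat.lt_succ_iff_lt_or_eq.mp hi with hlt | heq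
        · rw [hxe_lt i (by omega), hxe_lt (i+1) (by omega)]
          exact hchain i hlt
        · rw [hxe_lt i (by omega), (by omega : i+1 = m+1), hxe_top, heq]
          exact ⟨fun _ => hp, fun hne => absurd hev hne⟩
      · intro i hi j hj hij
        simp only [Set.mem_setOf_eq] at hi hj
        by_cases hi1 : i = m+1 <;> by_cases hj1 : j = m+1
        · omega
        · rw [hi1, hxe_top, hxe_lt j (by omega)] at hij
          exact absurd hij.symm (hfresh j (by omega))
        · rw [hj1, hxe_top, hxe_lt i (by omega)] at hij
          exact absurd hij (hfresh i (by omega))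
        · rw [hxe_lt i (by omega), hxe_lt j (by omega)] at hij
          exact hinj (by simp only [Set.mem_setOf_eq]; omega)
            (by simp only [Set.mem_setOf_eq]; omega) hij
    have := le_csSup hSbdd hmem
    omega
  · -- m odd: extend with Q-partner of x m
    have hxmQ : x m ∈ Q.verts := hterm.1 (Nat.not_even_iff_odd.mpr hod)
    obtain ⟨q, hq, hqu⟩ := hQ hxmQ
    have hfresh : ∀ j ≤ m, x j ≠ q := by
      intro j hj heq
      rcases Nat.eq_zero_or_pos j with rfl | hjpos
      · exact huQ (hx0 ▸ Q.edge_vert (heq ▸ hq.symm))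
      · rcases eq_or_lt_of_le hj with rfl | hlt
        · exact adj_ne hq (heq ▸ rfl)
        · rcases Nat.even_or_odd j with hjev | hjod
          · have hjev' : ¬ Even (j-1) := by
              rcases hjev with ⟨c, hc⟩; rintro ⟨d, hd⟩; omega
            have hedge : Q.Adj (x (j-1)) (x (j-1+1)) := (hchain (j-1) (by omega)).2 hjev'
            rw [(by omega : j - 1 + 1 = j)] at hedge
            have h2 : x (j-1) = x m := matching_unique hQ (heq ▸ hedge.symm) hq.symm
            have := hinj (by simp only [Set.mem_setOf_eq]; omega : j-1 ∈ {i | i ≤ m})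
              (by simp : m ∈ {i | i ≤ m}) h2
            omega
          · have hedge : Q.Adj (x j) (x (j+1)) :=
              (hchain j hlt).2 (Nat.not_even_iff_odd.mpr hjod)
            have h2 : x (j+1) = x m := matching_unique hQ (heq ▸ hedge) hq.symm
            have := hinj (by simp only [Set.mem_setOf_eq]; omega : j+1 ∈ {i | i ≤ m})
              (by simp : m ∈ {i | i ≤ m}) h2
            rcases hod with ⟨c, hc⟩; rcases hjod with ⟨d, hd⟩; omega
    have hmem : m + 1 ∈ S := by
      set xe : ℕ → V := fun i => if i = m+1 then q else x i with hxe
      have hxe_lt : ∀ i, i ≤ m → xe i = x i := by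
        intro i hi
        have hine : i ≠ m+1 := by omega
        simp only [hxe, if_neg hine]
      have hxe_top : xe (m+1) = q := by simp only [hxe, if_pos rfl]
      refine ⟨xe, by rw [hxe_lt 0 (by omega)]; exact hx0, ?_, ?_⟩
      · intro i hi
        rcases Nat.lt_succ_iff_lt_or_eq.mp hi with hlt | heq
        · rw [hxe_lt i (by omega), hxe_lt (i+1) (by omega)]
          exact hchain i hlt
        · rw [hxe_lt i (by omega), (by omega : i+1 = m+1), hxe_top, heq]
          exact ⟨fun hevm => absurd hod (Nat.not_odd_iff_even.mpr hevm), fun _ => hq⟩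
      · intro i hi j hj hij
        simp only [Set.mem_setOf_eq] at hi hj
        by_cases hi1 : i = m+1 <;> by_cases hj1 : j = m+1
        · omega
        · rw [hi1, hxe_top, hxe_lt j (by omega)] at hij
          exact absurd hij.symm (hfresh j (by omega))
        · rw [hj1, hxe_top, hxe_lt i (by omega)] at hij
          exact absurd hij (hfresh i (by omega))
        · rw [hxe_lt i (by omega), hxe_lt j (by omega)] at hij
          exact hinj (by simp only [Set.mem_setOf_eq]; omega)
            (by simp only [Set.mem_setOf_eq]; omega) hij
    have := le_csSup hSbdd hmem
    omega

/-- A matching avoiding a set of vertices. -/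
def MAvoid (G : SimpleGraph V) (S : Set V) (M : G.Subgraph) : Prop :=
  M.IsMatching ∧ ∀ v ∈ S, v ∉ M.verts

/-- A maximum matching among those avoiding `S`. -/
def IsMaxAvoid (G : SimpleGraph V) (S : Set V) (M : G.Subgraph) : Prop :=
  MAvoid G S M ∧ ∀ M' : G.Subgraph, MAvoid G S M' → M'.edgeSet.ncard ≤ M.edgeSet.ncard

/-- Maximum size of a matching avoiding `S`. -/
noncomputable def nuA (G : SimpleGraph V) (S : Set V) : ℕ :=
  sSup {n | ∃ M : G.Subgraph, MAvoid G S M ∧ M.edgeSet.ncard = n}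

/-- Vertices exposed by some maximum `S`-avoiding matching. -/
def DA (G : SimpleGraph V) (S : Set V) : Set V :=
  {v | ∃ M : G.Subgraph, IsMaxAvoid G S M ∧ v ∉ M.verts}

lemma nuA_set_nonempty (S : Set V) :
    {n | ∃ M : G.Subgraph, MAvoid G S M ∧ M.edgeSet.ncard = n}.Nonempty := by
  refine ⟨0, ⊥, ⟨?_, ?_⟩, ?_⟩
  · intro v hv
    simp only [Subgraph.verts_bot, Set.mem_empty_iff_false] at hv
  · intro v _
    simp
  · simp [Subgraph.edgeSet_bot]

lemma nuA_set_bdd (S : Set V) :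
    BddAbove {n | ∃ M : G.Subgraph, MAvoid G S M ∧ M.edgeSet.ncard = n} := by
  refine ⟨(Set.univ : Set (Sym2 V)).ncard, ?_⟩
  rintro n ⟨M, _, rfl⟩
  exact Set.ncard_le_ncard (Set.subset_univ _) (Set.toFinite _)

lemma exists_maxAvoid (S : Set V) : ∃ M : G.Subgraph, IsMaxAvoid G S M := by
  have := Nat.sSup_mem (nuA_set_nonempty (G := G) S) (nuA_set_bdd S)
  obtain ⟨M, hM, hcard⟩ := this
  refine ⟨M, hM, ?_⟩
  intro M' hM'
  rw [hcard]
  exact le_csSup (nuA_set_bdd S) ⟨M', hM', rfl⟩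

lemma maxAvoid_ncard {S : Set V} {M : G.Subgraph} (h : IsMaxAvoid G S M) :
    M.edgeSet.ncard = nuA G S := by
  refine le_antisymm (le_csSup (nuA_set_bdd S) ⟨M, h.1, rfl⟩) ?_
  obtain ⟨M', hM'⟩ := exists_maxAvoid (G := G) S
  have h1 : M'.edgeSet.ncard ≤ M.edgeSet.ncard := h.2 M' hM'.1
  have h2 : nuA G S ≤ M'.edgeSet.ncard := by
    have := Nat.sSup_mem (nuA_set_nonempty (G := G) S) (nuA_set_bdd S)
    obtain ⟨N, hN, hcard⟩ := this
    rw [nuA, ← hcard]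
    exact hM'.2 N hN
  omega

lemma maxAvoid_of_ncard {S : Set V} {M : G.Subgraph} (h : MAvoid G S M)
    (hc : M.edgeSet.ncard = nuA G S) : IsMaxAvoid G S M := by
  refine ⟨h, fun M' hM' => ?_⟩
  rw [hc]
  exact le_csSup (nuA_set_bdd S) ⟨M', hM', rfl⟩

lemma maximum_iff_maxAvoid_empty {M : G.Subgraph} :
    IsMaximumMatching G M ↔ IsMaxAvoid G (∅ : Set V) M := by
  constructor
  · rintro ⟨h1, h2⟩
    exact ⟨⟨h1, fun v hv => absurd hv (Set.notMem_empty v)⟩, fun M' hM' => h2 M' hM'.1⟩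
  · rintro ⟨⟨h1, _⟩, h2⟩
    exact ⟨h1, fun M' hM' => h2 M' ⟨hM', fun v hv => absurd hv (Set.notMem_empty v)⟩⟩

lemma Dset_eq_DA_empty : Dset G = DA G (∅ : Set V) := by
  ext v
  constructor
  · rintro ⟨M, hM, hv⟩
    exact ⟨M, maximum_iff_maxAvoid_empty.mp hM, hv⟩
  · rintro ⟨M, hM, hv⟩
    exact ⟨M, maximum_iff_maxAvoid_empty.mpr hM, hv⟩

lemma covered_of_not_DA {S : Set V} {M : G.Subgraph} (hM : IsMaxAvoid G S M) {v : V}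
    (hv : v ∉ DA G S) : v ∈ M.verts := by
  by_contra hc
  exact hv ⟨M, hM, hc⟩

/-- Stability, part (i): the max matching size drops by one when an `A`-type
vertex is additionally avoided. -/
lemma stab_nu {S : Set V} {a : V}
    (hacov : ∀ N : G.Subgraph, IsMaxAvoid G S N → a ∈ N.verts) :
    1 ≤ nuA G S ∧ nuA G (insert a S) = nuA G S - 1 := by
  classical
  obtain ⟨Mw, hMw⟩ := exists_maxAvoid (G := G) S
  have haMw : a ∈ Mw.verts := hacov Mw hMw
  obtain ⟨b, hb, -⟩ := hMw.1.1 haMw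
  have h1 : 1 ≤ nuA G S := by
    rw [← maxAvoid_ncard hMw]
    have : s(a, b) ∈ Mw.edgeSet := hb
    have := (Set.ncard_pos (Set.toFinite _)).mpr ⟨_, this⟩
    omega
  refine ⟨h1, le_antisymm ?_ ?_⟩
  · -- ≤ : a maximum (insert a S)-avoiding matching has size < nuA S
    obtain ⟨N, hN⟩ := exists_maxAvoid (G := G) (insert a S)
    have hNS : MAvoid G S N := ⟨hN.1.1, fun v hv => hN.1.2 v (Set.mem_insert_of_mem _ hv)⟩
    have hle : N.edgeSet.ncard ≤ nuA G S := by
      rw [← maxAvoid_ncard hMw]; exact hMw.2 N hNS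
    have hne : N.edgeSet.ncard ≠ nuA G S := by
      intro heq
      have := hacov N (maxAvoid_of_ncard hNS heq)
      exact hN.1.2 a (Set.mem_insert _ _) this
    rw [← maxAvoid_ncard hN]
    omega
  · -- ≥ : delete a's edge from Mw
    obtain ⟨M₁, hM₁, hV₁, hE₁, hc₁⟩ := del_edge hMw.1.1 hb
    have hM₁av : MAvoid G (insert a S) M₁ := by
      refine ⟨hM₁, ?_⟩
      rintro v (rfl | hv)
      · rw [hV₁]; rintro ⟨-, hmem⟩; exact hmem (Or.inl rfl)
      · rw [hV₁]; rintro ⟨hmem, -⟩; exact hMw.1.2 v hv hmem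
    have : M₁.edgeSet.ncard ≤ nuA G (insert a S) :=
      le_csSup (nuA_set_bdd _) ⟨M₁, hM₁av, rfl⟩
    rw [hc₁, maxAvoid_ncard hMw] at this
    omega

/-- Stability, part (ii), hard direction. -/
lemma stab_D {S : Set V} {a w : V}
    (haS : a ∉ S) (hwS : w ∉ S) (haw : G.Adj a w)
    (hacov : ∀ N : G.Subgraph, IsMaxAvoid G S N → a ∈ N.verts)
    (hwD : w ∈ DA G S) :
    ∀ v, v ∉ S → v ≠ a → (v ∈ DA G (insert a S) ↔ v ∈ DA G S) := by
  classical
  obtain ⟨hnu1, hnudrop⟩ := stab_nu (G := G) hacov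
  intro v hvS hva
  constructor
  · -- hard direction
    rintro ⟨M', hM', hvM'⟩
    obtain ⟨Mw, hMw, hwMw⟩ := hwD
    by_cases hvMw : v ∈ Mw.verts
    swap
    · exact ⟨Mw, hMw, hvMw⟩
    obtain ⟨m, x, hm0, hx0, hchain, hinj, hend⟩ :=
      forced_walk hMw.1.1 hM'.1.1 hvMw hvM'
    have chainW : ∀ j, j < m → j % 2 = 0 → Mw.Adj (x j) (x (j+1)) :=
      fun j h hp => (hchain j h).1 (Nat.even_iff.mpr hp)
    have chainM' : ∀ j, j < m → j % 2 = 1 → M'.Adj (x j) (x (j+1)) :=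
      fun j h hp => (hchain j h).2 (by rw [Nat.even_iff]; omega)
    have hxW : ∀ j, j ≤ m → (j % 2 = 1 ∨ j < m) → x j ∈ Mw.verts := by
      intro j hj hcase
      rcases Nat.even_or_odd j with hev | hod
      · have hjlt : j < m := by
          rcases hcase with h | h
          · rw [Nat.even_iff] at hev; omega
          · exact h
        exact Mw.edge_vert (chainW j hjlt (Nat.even_iff.mp hev))
      · have := chainW (j-1) (by omega) (by rw [Nat.odd_iff] at hod; omega)
        rw [(by rw [Nat.odd_iff] at hod; omega : j - 1 + 1 = j)] at this
        exact Mw.edge_vert this.symm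
    have hxM' : ∀ j, 1 ≤ j → j ≤ m → (j % 2 = 0 ∨ j < m) → x j ∈ M'.verts := by
      intro j h1 hj hcase
      rcases Nat.even_or_odd j with hev | hod
      · have := chainM' (j-1) (by omega) (by rw [Nat.even_iff] at hev; omega)
        rw [(by rw [Nat.even_iff] at hev; omega : j - 1 + 1 = j)] at this
        exact M'.edge_vert this.symm
      · have hjlt : j < m := by
          rcases hcase with h | h
          · rw [Nat.odd_iff] at hod; omega
          · exact h
        exact M'.edge_vert (chainM' j hjlt (Nat.odd_iff.mp hod))
    rcases hend with ⟨hmodd, hxmQ⟩ | ⟨hmev, hxmP⟩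
    · -- m odd, x m not covered by M'
      rw [Nat.not_even_iff] at hmodd
      by_cases hxa : x m = a
      · -- case α1
        set z : ℕ → V := fun j => if j = 0 then w else x (m+1-j) with hz
        have hz0 : z 0 = w := rfl
        have hzpos : ∀ j, 1 ≤ j → z j = x (m+1-j) := by
          intro j hj; simp only [hz, if_neg (by omega : j ≠ 0)]
        set k := (m+1)/2 with hk
        have h2k : 2*k = m+1 := by omega
        obtain ⟨N₂, hN₂, hV₂, hE₂, hc₂⟩ := shift hMw.1.1 k z
          (by
            intro i hi j hj hij
            simp only [Set.mem_setOf_eq] at hi hj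
            rcases Nat.eq_zero_or_pos i with rfl | hi1 <;>
              rcases Nat.eq_zero_or_pos j with rfl | hj1
            · rfl
            · exfalso
              rw [hz0, hzpos j hj1] at hij
              exact hwMw (by rw [hij]; exact hxW (m+1-j) (by omega) (by omega))
            · exfalso
              rw [hz0, hzpos i hi1] at hij
              exact hwMw (by rw [← hij]; exact hxW (m+1-i) (by omega) (by omega))
            · rw [hzpos i hi1, hzpos j hj1] at hij
              have := hinj (by simp only [Set.mem_setOf_eq]; omega)
                (by simp only [Set.mem_setOf_eq]; omega) hij
              omega)
          (by rw [hz0]; exact hwMw)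
          (by
            intro i hi
            rcases Nat.eq_zero_or_pos i with rfl | hi1
            · rw [(by norm_num : 2*0 = 0), (by norm_num : 2*0+1 = 1), hz0,
                hzpos 1 (by omega), (by omega : m+1-1 = m), hxa]
              exact haw.symm
            · rw [hzpos (2*i) (by omega), hzpos (2*i+1) (by omega),
                (by omega : m+1-(2*i) = m-2*i+1), (by omega : m+1-(2*i+1) = m-2*i)]
              exact (M'.adj_sub (chainM' (m-2*i) (by omega) (by omega))).symm)
          (by
            intro i hi
            rw [hzpos (2*i+1) (by omega), hzpos (2*i+2) (by omega),
              (by omega : m+1-(2*i+1) = m-1-2*i+1), (by omega : m+1-(2*i+2) = m-1-2*i)]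
            exact (chainW (m-1-2*i) (by omega) (by omega)).symm)
        refine ⟨N₂, maxAvoid_of_ncard ⟨hN₂, ?_⟩ (by rw [hc₂, maxAvoid_ncard hMw]), ?_⟩
        · intro t ht
          rw [hV₂]
          rintro ⟨hmem, -⟩
          rcases Set.mem_insert_iff.mp hmem with heq | hmem
          · rw [hz0] at heq
            subst heq
            exact hwS ht
          · exact hMw.1.2 t ht hmem
        · rw [hV₂]
          rintro ⟨-, hmem⟩
          apply hmem
          rw [Set.mem_singleton_iff, hzpos (2*k) (by omega), h2k,
            (by omega : m+1-(m+1) = 0), hx0]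
      · -- case α2 : contradiction with a covered
        exfalso
        set z : ℕ → V := fun j => x (m - j) with hz
        set k := (m-1)/2 with hk
        have h2k : 2*k = m-1 := by omega
        obtain ⟨N₃, hN₃, hV₃, hE₃, hc₃⟩ := shift hM'.1.1 k z
          (by
            intro i hi j hj hij
            simp only [Set.mem_setOf_eq, hz] at hi hj hij
            have := hinj (by simp only [Set.mem_setOf_eq]; omega)
              (by simp only [Set.mem_setOf_eq]; omega) hij
            omega)
          (by simp only [hz, Nat.sub_zero]; exact hxmQ)
          (by
            intro i hi
            simp only [hz]
            rw [(by omega : m - (2*i) = m-1-2*i+1), (by omega : m - (2*i+1) = m-1-2*i)]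
            exact (Mw.adj_sub (chainW (m-1-2*i) (by omega) (by omega))).symm)
          (by
            intro i hi
            simp only [hz]
            rw [(by omega : m - (2*i+1) = m-2-2*i+1), (by omega : m - (2*i+2) = m-2-2*i)]
            exact (chainM' (m-2-2*i) (by omega) (by omega)).symm)
        have hz2k : z (2*k) = x 1 := by
          simp only [hz]; rw [h2k]; congr 1; omega
        have hzz0 : z 0 = x m := by simp only [hz, Nat.sub_zero]
        have hvN₃ : v ∉ N₃.verts := by
          rw [hV₃]
          rintro ⟨hmem, -⟩
          rcases Set.mem_insert_iff.mp hmem with heq | hmem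
          · rw [hzz0] at heq
            have := hinj (by simp only [Set.mem_setOf_eq]; omega : (0:ℕ) ∈ {i | i ≤ m})
              (by simp only [Set.mem_setOf_eq]; omega : m ∈ {i | i ≤ m}) (by rw [hx0, heq])
            omega
          · exact hvM' hmem
        have hx1N₃ : x 1 ∉ N₃.verts := by
          rw [hV₃, ← hz2k]
          rintro ⟨-, hmem⟩
          exact hmem rfl
        have hGedge : G.Adj v (x 1) := by
          rw [← hx0]
          exact Mw.adj_sub (chainW 0 (by omega) (by omega))
        obtain ⟨M₄, hM₄, hV₄, hE₄, hc₄⟩ := add_edge hN₃ hGedge hvN₃ hx1N₃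
        have hM₄S : MAvoid G S M₄ := by
          refine ⟨hM₄, ?_⟩
          intro t ht
          rw [hV₄, hV₃]
          rintro (⟨hmem, -⟩ | hmem)
          · rcases Set.mem_insert_iff.mp hmem with heq | hmem
            · rw [hzz0] at heq
              subst heq
              exact hMw.1.2 _ ht (hxW m (by omega) (by omega))
            · exact hM'.1.2 t (Set.mem_insert_of_mem _ ht) hmem
          · rcases Set.mem_insert_iff.mp hmem with rfl | hmem
            · exact hvS ht
            · rw [Set.mem_singleton_iff] at hmem
              subst hmem
              exact hMw.1.2 _ ht (hxW 1 (by omega) (by omega))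
        have hM₄max : IsMaxAvoid G S M₄ := by
          refine maxAvoid_of_ncard hM₄S ?_
          rw [hc₄, hc₃, maxAvoid_ncard hM', hnudrop]
          omega
        have haM₄ : a ∈ M₄.verts := hacov M₄ hM₄max
        rw [hV₄, hV₃] at haM₄
        rcases haM₄ with ⟨hmem, -⟩ | hmem
        · rcases Set.mem_insert_iff.mp hmem with heq | hmem
          · rw [hzz0] at heq
            exact hxa heq.symm
          · exact hM'.1.2 a (Set.mem_insert _ _) hmem
        · rcases Set.mem_insert_iff.mp hmem with rfl | hmem
          · exact hva rfl
          · rw [Set.mem_singleton_iff] at hmem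
            have hx1 : x 1 ∈ M'.verts := by
              refine hxM' 1 (by omega) (by omega) ?_
              rcases Nat.eq_or_lt_of_le (show 1 ≤ m by omega) with heq | hlt
              · exfalso; exact hxa (by rw [← heq, ← hmem])
              · right; exact hlt
            rw [← hmem] at hx1
            exact hM'.1.2 a (Set.mem_insert _ _) hx1
    · -- case β : m even, x m not covered by Mw
      rw [Nat.even_iff] at hmev
      set z : ℕ → V := fun j => x (m - j) with hz
      set k := m/2 with hk
      have h2k : 2*k = m := by omega
      obtain ⟨N₅, hN₅, hV₅, hE₅, hc₅⟩ := shift hMw.1.1 k z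
        (by
          intro i hi j hj hij
          simp only [Set.mem_setOf_eq, hz] at hi hj hij
          have := hinj (by simp only [Set.mem_setOf_eq]; omega)
            (by simp only [Set.mem_setOf_eq]; omega) hij
          omega)
        (by simp only [hz, Nat.sub_zero]; exact hxmP)
        (by
          intro i hi
          simp only [hz]
          rw [(by omega : m - (2*i) = m-1-2*i+1), (by omega : m - (2*i+1) = m-1-2*i)]
          exact (M'.adj_sub (chainM' (m-1-2*i) (by omega) (by omega))).symm)
        (by
          intro i hi
          simp only [hz]
          rw [(by omega : m - (2*i+1) = m-2-2*i+1), (by omega : m - (2*i+2) = m-2-2*i)]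
          exact (chainW (m-2-2*i) (by omega) (by omega)).symm)
      have hzz0 : z 0 = x m := by simp only [hz, Nat.sub_zero]
      refine ⟨N₅, maxAvoid_of_ncard ⟨hN₅, ?_⟩ (by rw [hc₅, maxAvoid_ncard hMw]), ?_⟩
      · intro t ht
        rw [hV₅]
        rintro ⟨hmem, -⟩
        rcases Set.mem_insert_iff.mp hmem with heq | hmem
        · rw [hzz0] at heq
          subst heq
          exact hM'.1.2 _ (Set.mem_insert_of_mem _ ht) (hxM' m (by omega) (by omega) (by omega))
        · exact hMw.1.2 t ht hmem
      · rw [hV₅]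
        rintro ⟨-, hmem⟩
        apply hmem
        rw [Set.mem_singleton_iff]
        simp only [hz]
        rw [h2k, (by omega : m - m = 0), hx0]
  · -- easy direction
    rintro ⟨N, hN, hvN⟩
    have haN : a ∈ N.verts := hacov N hN
    obtain ⟨b, hb, -⟩ := hN.1.1 haN
    obtain ⟨M₁, hM₁, hV₁, hE₁, hc₁⟩ := del_edge hN.1.1 hb
    have hM₁av : MAvoid G (insert a S) M₁ := by
      refine ⟨hM₁, ?_⟩
      rintro t htmem
      rcases Set.mem_insert_iff.mp htmem with rfl | hs
      · rw [hV₁]; rintro ⟨-, hmem⟩; exact hmem (Or.inl rfl)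
      · rw [hV₁]; rintro ⟨hmem, -⟩; exact hN.1.2 t hs hmem
    refine ⟨M₁, maxAvoid_of_ncard hM₁av ?_, ?_⟩
    · rw [hc₁, maxAvoid_ncard hN, hnudrop]
    · rw [hV₁]
      rintro ⟨hmem, -⟩
      exact hvN hmem

lemma D_disj_A {v : V} (hv : v ∈ Dset G) : v ∉ Aset G := fun h => h.1 hv

lemma stab_iter (S : Finset V) : ↑S ⊆ Aset G →
    (nuA G ↑S + S.card = nuA G (∅ : Set V) ∧
      ∀ v, v ∉ (S : Set V) → (v ∈ DA G ↑S ↔ v ∈ DA G (∅ : Set V))) := by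
  classical
  induction S using Finset.induction_on with
  | empty =>
    intro _
    constructor
    · simp
    · intro v _
      simp
  | @insert a S haS IH =>
    intro hsub
    have hSsub : (S : Set V) ⊆ Aset G := by
      intro v hv
      exact hsub (by simpa using Or.inr hv)
    obtain ⟨hnuIH, hDIH⟩ := IH hSsub
    have haA : a ∈ Aset G := hsub (by simp)
    obtain ⟨haD, w, hwD, hawG⟩ := haA
    have haSc : a ∉ (S : Set V) := by simpa using haS
    have hacov : ∀ N : G.Subgraph, IsMaxAvoid G (↑S : Set V) N → a ∈ N.verts := by
      intro N hN
      by_contra hc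
      have h1 : a ∈ DA G ↑S := ⟨N, hN, hc⟩
      have h2 : a ∈ DA G (∅ : Set V) := (hDIH a haSc).mp h1
      rw [← Dset_eq_DA_empty] at h2
      exact haD h2
    have hwS : w ∉ (S : Set V) := fun h => D_disj_A hwD (hSsub h)
    have hwDA : w ∈ DA G ↑S := (hDIH w hwS).mpr (by rw [← Dset_eq_DA_empty]; exact hwD)
    obtain ⟨hnu1, hdrop⟩ := stab_nu (G := G) hacov
    have hcoe : ((insert a S : Finset V) : Set V) = insert a (S : Set V) := by
      simp
    constructor
    · rw [hcoe, hdrop, Finset.card_insert_of_notMem haS]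
      omega
    · intro v hv
      rw [hcoe] at hv ⊢
      have hva : v ≠ a := fun h => hv (h ▸ Set.mem_insert _ _)
      have hvS : v ∉ (S : Set V) := fun h => hv (Set.mem_insert_of_mem _ h)
      rw [stab_D haSc hwS hawG hacov hwDA v hvS hva]
      exact hDIH v hvS

lemma DA_A_eq_Dset {v : V} (hv : v ∉ Aset G) : v ∈ DA G (Aset G) ↔ v ∈ Dset G := by
  classical
  have hfin : (Aset G).Finite := Set.toFinite _
  have hcoe : (hfin.toFinset : Set V) = Aset G := hfin.coe_toFinset
  have := (stab_iter (G := G) hfin.toFinset (by rw [hcoe])).2 v (by rw [hcoe]; exact hv)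
  rw [hcoe] at this
  rw [this, ← Dset_eq_DA_empty]

/-- Part (1): every maximum matching matches each vertex of `A` into `D`. -/
lemma part1 {M : G.Subgraph} (hM : IsMaximumMatching G M) {a : V} (ha : a ∈ Aset G) :
    ∃ d ∈ Dset G, M.Adj a d := by
  classical
  have hMax0 : IsMaxAvoid G (∅ : Set V) M := maximum_iff_maxAvoid_empty.mp hM
  obtain ⟨haD, w, hwD, hawG⟩ := ha
  have hacov : ∀ N : G.Subgraph, IsMaxAvoid G (∅ : Set V) N → a ∈ N.verts := by
    intro N hN
    by_contra hc
    exact haD (by rw [Dset_eq_DA_empty]; exact ⟨N, hN, hc⟩)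
  have haM : a ∈ M.verts := hacov M hMax0
  obtain ⟨b, hb, -⟩ := hM.1 haM
  obtain ⟨hnu1, hdrop⟩ := stab_nu (G := G) hacov
  obtain ⟨M₁, hM₁, hV₁, hE₁, hc₁⟩ := del_edge hM.1 hb
  have hM₁av : MAvoid G (insert a (∅ : Set V)) M₁ := by
    refine ⟨hM₁, ?_⟩
    intro t htmem
    rcases Set.mem_insert_iff.mp htmem with rfl | hfalse
    · rw [hV₁]; rintro ⟨-, hmem⟩; exact hmem (Or.inl rfl)
    · exact absurd hfalse (Set.notMem_empty t)
  have hM₁max : IsMaxAvoid G (insert a (∅ : Set V)) M₁ := by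
    refine maxAvoid_of_ncard hM₁av ?_
    rw [hc₁, maxAvoid_ncard hMax0, hdrop]
  have hbM₁ : b ∉ M₁.verts := by
    rw [hV₁]
    rintro ⟨-, hmem⟩
    exact hmem (Or.inr rfl)
  have hbDA : b ∈ DA G (insert a (∅ : Set V)) := ⟨M₁, hM₁max, hbM₁⟩
  have hwDA : w ∈ DA G (∅ : Set V) := by rw [← Dset_eq_DA_empty]; exact hwD
  have := (stab_D (Set.notMem_empty a) (Set.notMem_empty w) hawG hacov hwDA
    b (Set.notMem_empty b) (adj_ne hb).symm).mp hbDA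
  rw [← Dset_eq_DA_empty] at this
  exact ⟨b, this, hb⟩

/-- Gallai-type lemma: a maximum `A`-avoiding matching cannot miss two distinct
vertices joined by a walk through `D`. -/
lemma gal (l : ℕ) : ∀ (N : G.Subgraph), IsMaxAvoid G (Aset G) N →
    ∀ (p q : V) (wk : ℕ → V), p ≠ q → p ∉ N.verts → q ∉ N.verts →
    wk 0 = p → wk l = q → (∀ i < l, G.Adj (wk i) (wk (i+1))) →
    (∀ i ≤ l, wk i ∈ Dset G) → False := by
  classical
  induction l using Nat.strong_induction_on with
  | _ l IH =>
  intro N hN p q wk hpq hpN hqN hw0 hwl hadj hmemD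
  -- augmenting helper: two exposed adjacent vertices in D give a contradiction
  have haug : ∀ (N' : G.Subgraph), IsMaxAvoid G (Aset G) N' → ∀ p' q' : V,
      p' ∉ N'.verts → q' ∉ N'.verts → G.Adj p' q' →
      p' ∈ Dset G → q' ∈ Dset G → False := by
    intro N' hN' p' q' hp' hq' hadj' hpD hqD
    obtain ⟨Mp, hMp, hVp, hEp, hcp⟩ := add_edge hN'.1.1 hadj' hp' hq'
    have hav : MAvoid G (Aset G) Mp := by
      refine ⟨hMp, ?_⟩
      intro s hs
      rw [hVp]
      rintro (hmem | hmem)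
      · exact hN'.1.2 s hs hmem
      · rcases Set.mem_insert_iff.mp hmem with rfl | hmem
        · exact D_disj_A hpD hs
        · rw [Set.mem_singleton_iff] at hmem
          subst hmem
          exact D_disj_A hqD hs
    have := hN'.2 Mp hav
    omega
  rcases Nat.eq_zero_or_pos l with rfl | hl0
  · rw [hw0] at hwl
    exact hpq hwl
  by_cases hl1 : wk 1 = q
  · -- edge p - q directly
    have hpq' : G.Adj p q := by
      have h01 : G.Adj (wk 0) (wk 1) := hadj 0 (by omega)
      rwa [hw0, hl1] at h01
    exact haug N hN p q hpN hqN hpq' (hw0 ▸ hmemD 0 (by omega)) (hwl ▸ hmemD l (by omega))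
  -- t := wk 1, interior vertex
  obtain ⟨t, ht⟩ : ∃ t, wk 1 = t := ⟨wk 1, rfl⟩
  rw [ht] at hl1
  have htD : t ∈ Dset G := ht ▸ hmemD 1 (by omega)
  have hadj01 : G.Adj p t := by
    have h01 : G.Adj (wk 0) (wk 1) := hadj 0 (by omega)
    rwa [hw0, ht] at h01
  have htp : t ≠ p := fun h => G.irrefl (h ▸ hadj01)
  have hl2 : 2 ≤ l := by
    rcases Nat.lt_or_ge l 2 with h | h
    · exfalso
      have hleq : l = 1 := by omega
      subst hleq
      exact hl1 (ht ▸ hwl)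
    · exact h
  -- a maximum A-avoiding matching missing t exists
  have htDA : t ∈ DA G (Aset G) := (DA_A_eq_Dset (D_disj_A htD)).mpr htD
  -- choose N* missing t maximizing the overlap with N
  set F := {X : G.Subgraph | IsMaxAvoid G (Aset G) X ∧ t ∉ X.verts} with hF
  set μ : G.Subgraph → ℕ := fun X => (X.edgeSet ∩ N.edgeSet).ncard with hμ
  have hFne : (μ '' F).Nonempty := by
    obtain ⟨X, hX⟩ := htDA
    exact ⟨μ X, X, hX, rfl⟩
  have hFbdd : BddAbove (μ '' F) := by
    refine ⟨(Set.univ : Set (Sym2 V)).ncard, ?_⟩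
    rintro n ⟨X, -, rfl⟩
    exact Set.ncard_le_ncard (Set.subset_univ _) (Set.toFinite _)
  obtain ⟨Nst, hNstF, hNstmax⟩ : ∃ X ∈ F, ∀ Y ∈ F, μ Y ≤ μ X := by
    have := Nat.sSup_mem hFne hFbdd
    obtain ⟨X, hXF, hXval⟩ := this
    exact ⟨X, hXF, fun Y hY => hXval ▸ le_csSup hFbdd ⟨Y, hY, rfl⟩⟩
  obtain ⟨hNst, htNst⟩ := hNstF
  by_cases hpNst : p ∉ Nst.verts
  · -- pair (p, t) exposed for Nst, walk of length 1
    exact IH 1 (by omega) Nst hNst p t wk htp.symm hpNst htNst hw0 ht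
      (fun i hi => hadj i (by omega)) (fun i hi => hmemD i (by omega))
  push_neg at hpNst
  by_cases hqNst : q ∉ Nst.verts
  · -- pair (t, q) exposed for Nst, walk of length l - 1
    refine IH (l-1) (by omega) Nst hNst t q (fun i => wk (i+1)) ?_ htNst hqNst ht ?_ ?_ ?_
    · intro h; exact hl1 h
    · show wk (l - 1 + 1) = q
      rw [(by omega : l - 1 + 1 = l)]; exact hwl
    · intro i hi; exact hadj (i+1) (by omega)
    · intro i hi; exact hmemD (i+1) (by omega)
  push_neg at hqNst
  -- forced walk from p between Nst and N
  obtain ⟨m, x, hm0, hx0, hchain, hinj, hend⟩ := forced_walk hNst.1.1 hN.1.1 hpNst hpN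
  have chainS : ∀ j, j < m → j % 2 = 0 → Nst.Adj (x j) (x (j+1)) :=
    fun j h hp => (hchain j h).1 (Nat.even_iff.mpr hp)
  have chainN : ∀ j, j < m → j % 2 = 1 → N.Adj (x j) (x (j+1)) :=
    fun j h hp => (hchain j h).2 (by rw [Nat.even_iff]; omega)
  have hxS : ∀ j, j ≤ m → (j % 2 = 1 ∨ j < m) → x j ∈ Nst.verts := by
    intro j hj hcase
    rcases Nat.even_or_odd j with hev | hod
    · have hjlt : j < m := by
        rcases hcase with h | h
        · rw [Nat.even_iff] at hev; omega
        · exact h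
      exact Nst.edge_vert (chainS j hjlt (Nat.even_iff.mp hev))
    · have := chainS (j-1) (by omega) (by rw [Nat.odd_iff] at hod; omega)
      rw [(by rw [Nat.odd_iff] at hod; omega : j - 1 + 1 = j)] at this
      exact Nst.edge_vert this.symm
  have hxN : ∀ j, 1 ≤ j → j ≤ m → (j % 2 = 0 ∨ j < m) → x j ∈ N.verts := by
    intro j h1 hj hcase
    rcases Nat.even_or_odd j with hev | hod
    · have := chainN (j-1) (by omega) (by rw [Nat.even_iff] at hev; omega)
      rw [(by rw [Nat.even_iff] at hev; omega : j - 1 + 1 = j)] at this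
      exact N.edge_vert this.symm
    · have hjlt : j < m := by
        rcases hcase with h | h
        · rw [Nat.odd_iff] at hod; omega
        · exact h
      exact N.edge_vert (chainN j hjlt (Nat.odd_iff.mp hod))
  -- all vertices of the walk avoid A
  have hxnotA : ∀ j ≤ m, x j ∉ Aset G := by
    intro j hj hA
    rcases Nat.even_or_odd j with hev | hod
    · rcases Nat.eq_zero_or_pos j with rfl | hjpos
      · refine D_disj_A (hw0 ▸ hmemD 0 (by omega)) ?_
        rwa [← hx0]
      · exact hN.1.2 _ hA (hxN j (by omega) hj (Or.inl (Nat.even_iff.mp hev)))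
    · exact hNst.1.2 _ hA (hxS j hj (Or.inl (Nat.odd_iff.mp hod)))
  rcases hend with ⟨hmodd, hxmN⟩ | ⟨hmev, hxmS⟩
  · -- End1: m odd, x m not N-covered: augmenting path for N
    rw [Nat.not_even_iff] at hmodd
    set k := (m-1)/2 with hk
    have h2k : 2*k = m-1 := by omega
    obtain ⟨N', hN', hV', hE', hc'⟩ := shift hN.1.1 k x
      (hinj.mono (fun i hi => by simp only [Set.mem_setOf_eq] at *; omega))
      (by rw [hx0]; exact hpN)
      (fun i hi => Nst.adj_sub (chainS (2*i) (by omega) (by omega)))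
      (fun i hi => chainN (2*i+1) (by omega) (by omega))
    have hxm1V : x (m-1) ∉ N'.verts := by
      rw [hV', ← h2k]
      rintro ⟨-, hmem⟩
      exact hmem rfl
    have hxmV : x m ∉ N'.verts := by
      rw [hV']
      rintro ⟨hmem, -⟩
      rcases Set.mem_insert_iff.mp hmem with heq | hmem
      · have := hinj (by simp only [Set.mem_setOf_eq]; omega : m ∈ {i | i ≤ m})
          (by simp only [Set.mem_setOf_eq]; omega : (0:ℕ) ∈ {i | i ≤ m}) heq
        omega
      · exact hxmN hmem
    have hGlast : G.Adj (x (m-1)) (x m) := by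
      have := chainS (m-1) (by omega) (by omega)
      rw [(by omega : m - 1 + 1 = m)] at this
      exact Nst.adj_sub this
    obtain ⟨Mp, hMp, hVp, hEp, hcp⟩ := add_edge hN' hGlast hxm1V hxmV
    have hav : MAvoid G (Aset G) Mp := by
      refine ⟨hMp, ?_⟩
      intro s hs
      rw [hVp, hV']
      rintro (⟨hmem, -⟩ | hmem)
      · rcases Set.mem_insert_iff.mp hmem with heq | hmem
        · subst heq
          exact hxnotA 0 (by omega) hs
        · exact hN.1.2 s hs hmem
      · rcases Set.mem_insert_iff.mp hmem with rfl | hmem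
        · exact hxnotA (m-1) (by omega) hs
        · rw [Set.mem_singleton_iff] at hmem
          subst hmem
          exact hxnotA m (by omega) hs
    have := hN.2 Mp hav
    omega
  · -- End2: m even, x m not Nst-covered
    rw [Nat.even_iff] at hmev
    have hm2 : 2 ≤ m := by omega
    by_cases hxmt : x m = t
    · -- shift N to expose t, then recurse on shorter walk
      set k := m/2 with hk
      have h2k : 2*k = m := by omega
      obtain ⟨N₂, hN₂, hV₂, hE₂, hc₂⟩ := shift hN.1.1 k x
        (hinj.mono (fun i hi => by simp only [Set.mem_setOf_eq] at *; omega))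
        (by rw [hx0]; exact hpN)
        (fun i hi => Nst.adj_sub (chainS (2*i) (by omega) (by omega)))
        (fun i hi => chainN (2*i+1) (by omega) (by omega))
      have hN₂max : IsMaxAvoid G (Aset G) N₂ := by
        refine maxAvoid_of_ncard ⟨hN₂, ?_⟩ (by rw [hc₂, maxAvoid_ncard hN])
        intro s hs
        rw [hV₂]
        rintro ⟨hmem, -⟩
        rcases Set.mem_insert_iff.mp hmem with heq | hmem
        · subst heq
          exact hxnotA 0 (by omega) hs
        · exact hN.1.2 s hs hmem
      have htN₂ : t ∉ N₂.verts := by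
        rw [hV₂, h2k, hxmt]
        rintro ⟨-, hmem⟩
        exact hmem rfl
      have hqN₂ : q ∉ N₂.verts := by
        rw [hV₂]
        rintro ⟨hmem, -⟩
        rcases Set.mem_insert_iff.mp hmem with heq | hmem
        · rw [hx0] at heq
          exact hpq heq.symm
        · exact hqN hmem
      refine IH (l-1) (by omega) N₂ hN₂max t q (fun i => wk (i+1)) ?_ htN₂ hqN₂ ht ?_ ?_ ?_
      · intro h; exact hl1 h
      · show wk (l - 1 + 1) = q
        rw [(by omega : l - 1 + 1 = l)]; exact hwl
      · intro i hi; exact hadj (i+1) (by omega)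
      · intro i hi; exact hmemD (i+1) (by omega)
    · -- shift Nst backwards: increases overlap with N, contradiction
      set z : ℕ → V := fun j => x (m - j) with hz
      set k := m/2 with hk
      have h2k : 2*k = m := by omega
      obtain ⟨N₃, hN₃, hV₃, hE₃, hc₃⟩ := shift hNst.1.1 k z
        (by
          intro i hi j hj hij
          simp only [Set.mem_setOf_eq, hz] at hi hj hij
          have := hinj (by simp only [Set.mem_setOf_eq]; omega)
            (by simp only [Set.mem_setOf_eq]; omega) hij
          omega)
        (by simp only [hz, Nat.sub_zero]; exact hxmS)
        (by
          intro i hi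
          simp only [hz]
          rw [(by omega : m - (2*i) = m-1-2*i+1), (by omega : m - (2*i+1) = m-1-2*i)]
          exact (N.adj_sub (chainN (m-1-2*i) (by omega) (by omega))).symm)
        (by
          intro i hi
          simp only [hz]
          rw [(by omega : m - (2*i+1) = m-2-2*i+1), (by omega : m - (2*i+2) = m-2-2*i)]
          exact (chainS (m-2-2*i) (by omega) (by omega)).symm)
      have hzz0 : z 0 = x m := by simp only [hz, Nat.sub_zero]
      have hz2k : z (2*k) = x 0 := by simp only [hz]; rw [h2k, (by omega : m - m = 0)]
      -- N₃ is in F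
      have hN₃max : IsMaxAvoid G (Aset G) N₃ := by
        refine maxAvoid_of_ncard ⟨hN₃, ?_⟩ (by rw [hc₃, maxAvoid_ncard hNst])
        intro s hs
        rw [hV₃]
        rintro ⟨hmem, -⟩
        rcases Set.mem_insert_iff.mp hmem with heq | hmem
        · rw [hzz0] at heq
          subst heq
          exact hxnotA m (by omega) hs
        · exact hNst.1.2 s hs hmem
      have htN₃ : t ∉ N₃.verts := by
        rw [hV₃]
        rintro ⟨hmem, -⟩
        rcases Set.mem_insert_iff.mp hmem with heq | hmem
        · rw [hzz0] at heq
          exact hxmt heq.symm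
        · exact htNst hmem
      have hN₃F : N₃ ∈ F := ⟨hN₃max, htN₃⟩
      -- strict increase of overlap
      have hsub : (Nst.edgeSet ∩ N.edgeSet) ⊆ (N₃.edgeSet ∩ N.edgeSet) := by
        rintro e ⟨heS, heN⟩
        refine ⟨?_, heN⟩
        rw [hE₃]
        left
        refine ⟨heS, ?_⟩
        rintro ⟨i, hik, rfl⟩
        have hNadj : N.Adj (z (2*i+1)) (z (2*i+2)) := Subgraph.mem_edgeSet.mp heN
        simp only [hz] at hNadj
        rw [(by omega : m - (2*i+1) = m-2*i-2+1), (by omega : m - (2*i+2) = m-2*i-2)] at hNadj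
        have h2 : N.Adj (x (m-2*i-2+1)) (x (m-2*i-2+1+1)) :=
          chainN (m-2*i-2+1) (by omega) (by omega)
        have h3 := matching_unique hN.1.1 hNadj h2
        have := hinj (by simp only [Set.mem_setOf_eq]; omega)
          (by simp only [Set.mem_setOf_eq]; omega) h3
        omega
      have hmemnew : s(z 0, z 1) ∈ (N₃.edgeSet ∩ N.edgeSet) \ (Nst.edgeSet ∩ N.edgeSet) := by
      
        refine ⟨⟨?_, ?_⟩, ?_⟩
        · rw [hE₃]
          right
          exact ⟨0, by omega, by norm_num⟩
        · rw [Subgraph.mem_edgeSet]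
          simp only [hz, Nat.sub_zero]
          have := chainN (m-1) (by omega) (by omega)
          rw [(by omega : m - 1 + 1 = m)] at this
          exact this.symm
        · rintro ⟨heS, -⟩
          rw [Subgraph.mem_edgeSet] at heS
          exact hxmS (by rw [← hzz0]; exact Nst.edge_vert heS)
      have hss : (Nst.edgeSet ∩ N.edgeSet) ⊂ (N₃.edgeSet ∩ N.edgeSet) :=
        ⟨hsub, fun hcon => hmemnew.2 (hcon hmemnew.1)⟩
      have hlt := Set.ncard_lt_ncard hss (Set.toFinite _)
      have := hNstmax N₃ hN₃F
      simp only [hμ] at this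
      omega

/-- Removing the `A`-incident edges from a maximum matching gives a maximum
`S`-avoiding matching, for `S ⊆ A`. -/
lemma strip {M : G.Subgraph} (hM : IsMaximumMatching G M) :
    ∀ S : Finset V, ↑S ⊆ Aset G →
    ∃ MS : G.Subgraph, IsMaxAvoid G ↑S MS ∧
      MS.edgeSet ⊆ M.edgeSet ∧
      MS.verts = M.verts \ ((S : Set V) ∪ {b | ∃ s ∈ (S : Set V), M.Adj s b}) := by
  classical
  intro S
  induction S using Finset.induction_on with
  | empty =>
    intro _
    refine ⟨M, ?_, subset_rfl, ?_⟩
    · simpa using maximum_iff_maxAvoid_empty.mp hM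
    · simp
  | @insert a S haS IH =>
    intro hsub
    have hSsub : (S : Set V) ⊆ Aset G := by
      intro v hv
      exact hsub (by simpa using Or.inr hv)
    have haA : a ∈ Aset G := hsub (by simp)
    have haSc : a ∉ (S : Set V) := by simpa using haS
    obtain ⟨MS, hMSmax, hMSsub, hMSverts⟩ := IH hSsub
    -- a is covered by M with partner b in D
    have haM : a ∈ M.verts := by
      by_contra hc
      exact haA.1 ⟨M, hM, hc⟩
    obtain ⟨b, hb, -⟩ := hM.1 haM
    have hbD : b ∈ Dset G := by
      obtain ⟨d, hd, hadj⟩ := part1 hM haA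
      rwa [matching_unique hM.1 hb hadj]
    -- a is in MS.verts
    have haMS : a ∈ MS.verts := by
      rw [hMSverts]
      refine ⟨haM, ?_⟩
      rintro (hmem | ⟨s, hs, hsa⟩)
      · exact haSc hmem
      · -- a is the M-partner of s ∈ S ⊆ A, but partners of A-vertices are in D
        obtain ⟨d, hd, hadj⟩ := part1 hM (hSsub hs)
        rw [← matching_unique hM.1 hsa hadj] at hd
        exact haA.1 hd
    obtain ⟨b', hb', -⟩ := hMSmax.1.1 haMS
    have hbb : b' = b := matching_unique hM.1 (Subgraph.mem_edgeSet.mp (hMSsub hb')) hb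
    rw [hbb] at hb'
    obtain ⟨M₁, hM₁, hV₁, hE₁, hc₁⟩ := del_edge hMSmax.1.1 hb'
    have hanb : a ≠ b := adj_ne hb
    -- the new verts formula
    have hverts : M₁.verts =
        M.verts \ (((insert a S : Finset V) : Set V) ∪
          {x | ∃ s ∈ ((insert a S : Finset V) : Set V), M.Adj s x}) := by
      rw [hV₁, hMSverts]
      ext v
      simp only [Set.mem_diff, Set.mem_union, Set.mem_setOf_eq, Finset.coe_insert,
        Set.mem_insert_iff, Set.mem_singleton_iff]
      constructor
      · rintro ⟨⟨hvM, hnot⟩, hvab⟩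
        push_neg at hvab
        refine ⟨hvM, ?_⟩
        rintro ((rfl | hvS) | ⟨s, hs, hsv⟩)
        · exact hvab.1 rfl
        · exact hnot (Or.inl hvS)
        · rcases hs with rfl | hs
          · exact hvab.2 (matching_unique hM.1 hsv hb ▸ rfl)
          · exact hnot (Or.inr ⟨s, hs, hsv⟩)
      · rintro ⟨hvM, hnot⟩
        push_neg at hnot
        refine ⟨⟨hvM, ?_⟩, ?_⟩
        · rintro (hvS | ⟨s, hs, hsv⟩)
          · exact hnot.1.2 hvS
          · exact hnot.2 s (Or.inr hs) hsv
        · push_neg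
          constructor
          · exact hnot.1.1
          · intro h; exact hnot.2 a (Or.inl rfl) (h ▸ hb)
    refine ⟨M₁, ?_, ?_, hverts⟩
    · -- maximality
      have hcoe : ((insert a S : Finset V) : Set V) = insert a (S : Set V) := by simp
      have hacov : ∀ N : G.Subgraph, IsMaxAvoid G (↑S : Set V) N → a ∈ N.verts := by
        intro N hN
        by_contra hc
        have h1 : a ∈ DA G ↑S := ⟨N, hN, hc⟩
        have h2 : a ∈ DA G (∅ : Set V) := ((stab_iter S hSsub).2 a haSc).mp h1
        rw [← Dset_eq_DA_empty] at h2
        exact haA.1 h2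
      obtain ⟨hnu1, hdrop⟩ := stab_nu (G := G) hacov
      refine maxAvoid_of_ncard ⟨hM₁, ?_⟩ ?_
      · intro t htmem
        rw [hverts]
        rintro ⟨-, hmem⟩
        exact hmem (Or.inl htmem)
      · rw [hc₁, maxAvoid_ncard hMSmax, hcoe, hdrop]
    · rw [hE₁]
      exact (Set.diff_subset).trans hMSsub

end GE

/-- For every finite graph `G` and every maximum matching `M` of `G`: every
vertex of `A(G)` is matched by `M` to a vertex of `D(G)`, and distinct vertices
of `A(G)` are matched by `M` to vertices lying in distinct connected components
of the subgraph induced on `D(G)`. -/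
theorem gallaiEdmonds_A_matched_to_distinct_components {V : Type*} [Fintype V]
    (G : SimpleGraph V) (M : G.Subgraph) (hM : IsMaximumMatching G M) :
    (∀ a ∈ Aset G, ∃ d ∈ Dset G, M.Adj a d) ∧
    (∀ a ∈ Aset G, ∀ a' ∈ Aset G, a ≠ a' →
      ∀ (d d' : Dset G), M.Adj a ↑d → M.Adj a' ↑d' →
        (G.induce (Dset G)).connectedComponentMk d ≠
          (G.induce (Dset G)).connectedComponentMk d') := by
  classical
  refine ⟨fun a ha => GE.part1 hM ha, ?_⟩
  intro a ha a' ha' hne d d' had had'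
  intro hcc
  -- d ≠ d'
  have hdd : (d : V) ≠ (d' : V) := by
    intro h
    rw [← h] at had'
    exact hne (GE.matching_unique hM.1 had.symm had'.symm)
  -- the maximum A-avoiding matching obtained from M by stripping A-edges
  have hfin : (Aset G).Finite := Set.toFinite _
  have hcoe : (hfin.toFinset : Set V) = Aset G := hfin.coe_toFinset
  obtain ⟨MA, hMAmax, hMAsub, hMAverts⟩ := GE.strip hM hfin.toFinset (by rw [hcoe])
  rw [hcoe] at hMAmax hMAverts
  have hdMA : (d : V) ∉ MA.verts := by
    rw [hMAverts]
    rintro ⟨-, hmem⟩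
    exact hmem (Or.inr ⟨a, ha, had⟩)
  have hd'MA : (d' : V) ∉ MA.verts := by
    rw [hMAverts]
    rintro ⟨-, hmem⟩
    exact hmem (Or.inr ⟨a', ha', had'⟩)
  -- extract a walk in D from the equality of components
  have hreach : (G.induce (Dset G)).Reachable d d' := SimpleGraph.ConnectedComponent.exact hcc
  obtain ⟨W⟩ := hreach
  refine GE.gal W.length MA hMAmax (d : V) (d' : V)
    (fun i => ((W.getVert i : Dset G) : V)) hdd hdMA hd'MA ?_ ?_ ?_ ?_
  · exact congrArg Subtype.val W.getVert_zero
  · exact congrArg Subtype.val W.getVert_length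
  · intro i hi
    exact W.adj_getVert_succ hi
  · intro i _
    exact (W.getVert i).2
end

section
/- Let H be a finite directed graph with distinguished vertices s and t. Construct an undirected graph G and a matching M as follows: for each v ∈ V(H), G contains two vertices v_0, v_1 and the edge {v_0, v_1}, and M consists exactly of all these edges {v_0, v_1}; for each arc (u, v) ∈ E(H), G contains the edge {u_1, v_0}; finally, G contains two additional vertices w and r and the edges {w, s_0} and {t_1, w}. Then the blossoms of (G, M) containing the vertex w are in one-to-one correspondence with the directed simple paths from s to t in H. -/
/-- A blossom of `(G, M)` through the vertex `w`, described by its edge set `C`: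
there is a cycle through `w` of length `2k + 1`, exactly `k` of whose edges
belong to the matching `M`, whose edge set is `C`. -/
def IsBlossomThrough {W : Type*} (G : SimpleGraph W) (M : Set (Sym2 W)) (w : W)
    (C : Set (Sym2 W)) : Prop :=
  ∃ (c : G.Walk w w) (k : ℕ), c.IsCycle ∧ c.length = 2 * k + 1 ∧
    {e | e ∈ c.edges ∧ e ∈ M}.ncard = k ∧ C = {e | e ∈ c.edges}

/-- The undirected graph `G` built from a directed graph `(H, E)` with
distinguished vertices `src` and `tgt`: each `v ∈ H` yields two vertices
`v₀ = Sum.inl (v, 0)` and `v₁ = Sum.inl (v, 1)` joined by an edge; each arc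
`(u, v)` yields the edge `{u₁, v₀}`; and there are two extra vertices
`w = Sum.inr 0` and `r = Sum.inr 1`, with the edges `{w, src₀}` and
`{tgt₁, w}`. -/
def blossomGraph {H : Type*} (E : H → H → Prop) (src tgt : H) :
    SimpleGraph ((H × Fin 2) ⊕ Fin 2) :=
  SimpleGraph.fromEdgeSet
    ({e | ∃ v : H, e = s(Sum.inl (v, 0), Sum.inl (v, 1))} ∪
     {e | ∃ u v : H, E u v ∧ e = s(Sum.inl (u, 1), Sum.inl (v, 0))} ∪
     {s(Sum.inr 0, Sum.inl (src, 0)), s(Sum.inl (tgt, 1), Sum.inr 0)})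

/-- The matching `M` on `blossomGraph`: exactly the edges `{v₀, v₁}` for
`v ∈ H`. -/
def blossomMatching (H : Type*) : Set (Sym2 ((H × Fin 2) ⊕ Fin 2)) :=
  {e | ∃ v : H, e = s(Sum.inl (v, 0), Sum.inl (v, 1))}

namespace BlossomAux

attribute [local instance] Classical.propDecidable

variable {H : Type*} (E : H → H → Prop) (src tgt : H)

abbrev Wt (H : Type*) := (H × Fin 2) ⊕ Fin 2

def v0 (a : H) : Wt H := Sum.inl (a, 0)
def v1 (a : H) : Wt H := Sum.inl (a, 1)
def wv : Wt H := Sum.inr 0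

@[simp] lemma v0_inj {a b : H} : v0 a = v0 b ↔ a = b := by simp [v0]
@[simp] lemma v1_inj {a b : H} : v1 a = v1 b ↔ a = b := by simp [v1]
@[simp] lemma v0_ne_v1 {a b : H} : v0 a ≠ v1 b := by simp [v0, v1]
@[simp] lemma v1_ne_v0 {a b : H} : v1 a ≠ v0 b := by simp [v0, v1]
@[simp] lemma v0_ne_wv {a : H} : v0 a ≠ wv := by simp [v0, wv]
@[simp] lemma v1_ne_wv {a : H} : v1 a ≠ wv := by simp [v1, wv]
@[simp] lemma wv_ne_v0 {a : H} : wv ≠ v0 a := by simp [v0, wv]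
@[simp] lemma wv_ne_v1 {a : H} : wv ≠ v1 a := by simp [v1, wv]

@[simp] lemma m_mem_M (a : H) : s(v0 a, v1 a) ∈ blossomMatching H := ⟨a, rfl⟩

lemma mem_M_v0 {a : H} {x : Wt H} (h : s(v0 a, x) ∈ blossomMatching H) : x = v1 a := by
  obtain ⟨v, hv⟩ := h
  rw [Sym2.eq_iff] at hv
  simp only [v0, v1, Sum.inl.injEq, Prod.mk.injEq] at hv ⊢
  aesop

lemma mem_M_v1 {a : H} {x : Wt H} (h : s(v1 a, x) ∈ blossomMatching H) : x = v0 a := by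
  obtain ⟨v, hv⟩ := h
  rw [Sym2.eq_iff] at hv
  simp only [v0, v1, Sum.inl.injEq, Prod.mk.injEq] at hv ⊢
  aesop

@[simp] lemma wv_not_M_left {x : Wt H} : s(wv, x) ∉ blossomMatching H := by
  rintro ⟨v, hv⟩
  rw [Sym2.eq_iff] at hv
  simp [wv] at hv

@[simp] lemma wv_not_M_right {x : Wt H} : s(x, wv) ∉ blossomMatching H := by
  rw [Sym2.eq_swap]; exact wv_not_M_left

lemma adj_m (a : H) : (blossomGraph E src tgt).Adj (v0 a) (v1 a) := by
  rw [blossomGraph, SimpleGraph.fromEdgeSet_adj]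
  exact ⟨Or.inl (Or.inl ⟨a, rfl⟩), v0_ne_v1⟩

lemma adj_arc {a b : H} (h : E a b) : (blossomGraph E src tgt).Adj (v1 a) (v0 b) := by
  rw [blossomGraph, SimpleGraph.fromEdgeSet_adj]
  exact ⟨Or.inl (Or.inr ⟨a, b, h, rfl⟩), v1_ne_v0⟩

lemma adj_ws : (blossomGraph E src tgt).Adj wv (v0 src) := by
  rw [blossomGraph, SimpleGraph.fromEdgeSet_adj]
  exact ⟨Or.inr (Set.mem_insert _ _), wv_ne_v0⟩

lemma adj_tw : (blossomGraph E src tgt).Adj (v1 tgt) wv := by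
  rw [blossomGraph, SimpleGraph.fromEdgeSet_adj]
  exact ⟨Or.inr (Set.mem_insert_iff.mpr (Or.inr rfl)), v1_ne_wv⟩

lemma adj_w_cases {x : Wt H} (h : (blossomGraph E src tgt).Adj wv x) :
    x = v0 src ∨ x = v1 tgt := by
  rw [blossomGraph, SimpleGraph.fromEdgeSet_adj] at h
  obtain ⟨hmem, -⟩ := h
  simp only [Set.mem_union, Set.mem_setOf_eq, Set.mem_insert_iff, Set.mem_singleton_iff,
    Sym2.eq_iff, v0, v1, wv, Sum.inl.injEq, Prod.mk.injEq] at hmem ⊢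
  aesop

lemma adj_v0_cases {a : H} {x : Wt H} (h : (blossomGraph E src tgt).Adj (v0 a) x) :
    x = v1 a ∨ (∃ u, E u a ∧ x = v1 u) ∨ (a = src ∧ x = wv) := by
  rw [blossomGraph, SimpleGraph.fromEdgeSet_adj] at h
  obtain ⟨hmem, -⟩ := h
  simp only [Set.mem_union, Set.mem_setOf_eq, Set.mem_insert_iff, Set.mem_singleton_iff,
    Sym2.eq_iff, v0, v1, wv, Sum.inl.injEq, Prod.mk.injEq] at hmem ⊢
  aesop

lemma adj_v1_cases {a : H} {x : Wt H} (h : (blossomGraph E src tgt).Adj (v1 a) x) :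
    x = v0 a ∨ (∃ u, E a u ∧ x = v0 u) ∨ (a = tgt ∧ x = wv) := by
  rw [blossomGraph, SimpleGraph.fromEdgeSet_adj] at h
  obtain ⟨hmem, -⟩ := h
  simp only [Set.mem_union, Set.mem_setOf_eq, Set.mem_insert_iff, Set.mem_singleton_iff,
    Sym2.eq_iff, v0, v1, wv, Sum.inl.injEq, Prod.mk.injEq] at hmem ⊢
  aesop

noncomputable def mcount (l : List (Sym2 (Wt H))) : ℕ := l.countP (fun e => e ∈ blossomMatching H)

@[simp] lemma mcount_nil : mcount ([] : List (Sym2 (Wt H))) = 0 := rfl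

lemma mcount_cons (e : Sym2 (Wt H)) (l : List (Sym2 (Wt H))) :
    mcount (e :: l) = mcount l + if e ∈ blossomMatching H then 1 else 0 := by
  simp [mcount, List.countP_cons]

lemma mcount_reverse (l : List (Sym2 (Wt H))) : mcount l.reverse = mcount l := by
  simp [mcount]

lemma ncard_eq_mcount (l : List (Sym2 (Wt H))) (h : l.Nodup) :
    {e | e ∈ l ∧ e ∈ blossomMatching H}.ncard = mcount l := by
  have h1 : {e | e ∈ l ∧ e ∈ blossomMatching H}
      = ↑(l.filter (fun e => e ∈ blossomMatching H)).toFinset := by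
    ext e; simp [List.mem_filter]
  rw [h1, Set.ncard_coe_finset, List.toFinset_card_of_nodup (h.filter _),
    mcount, List.countP_eq_length_filter]

/-- The expected edge list of the part of the blossom after the vertex `w`,
for the directed path `v :: p`. -/
def eList : H → List H → List (Sym2 (Wt H))
  | v, [] => [s(v0 v, v1 v), s(v1 v, wv)]
  | v, x :: p => s(v0 v, v1 v) :: s(v1 v, v0 x) :: eList x p

@[simp] lemma eList_nil (v : H) : eList v [] = [s(v0 v, v1 v), s(v1 v, wv)] := rfl
@[simp] lemma eList_cons (v x : H) (p : List H) :
    eList v (x :: p) = s(v0 v, v1 v) :: s(v1 v, v0 x) :: eList x p := rfl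

lemma eList_length (v : H) (p : List H) : (eList v p).length = 2 * (p.length + 1) := by
  induction p generalizing v with
  | nil => simp
  | cons x p ih => simp [ih x]; ring

lemma mem_eList {e : Sym2 (Wt H)} : ∀ (v : H) (p : List H), e ∈ eList v p →
    (∃ a ∈ v :: p, e = s(v0 a, v1 a)) ∨ (∃ a b, e = s(v1 a, v0 b) ∧ a ∈ v :: p ∧ b ∈ p) ∨
      e = s(v1 ((v :: p).getLast (List.cons_ne_nil _ _)), wv)
  | v, [], h => by
    rcases List.mem_pair.mp h with h | h
    · exact Or.inl ⟨v, by simp, h⟩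
    · exact Or.inr (Or.inr (by simpa using h))
  | v, x :: p, h => by
    rcases List.mem_cons.mp h with h | h'
    case _ => exact Or.inl ⟨v, by simp, h⟩
    rcases List.mem_cons.mp h' with h | h
    · exact Or.inr (Or.inl ⟨v, x, h, by simp, by simp⟩)
    · rcases mem_eList x p h with ⟨a, ha, he⟩ | ⟨a, b, he, ha, hb⟩ | he
      · exact Or.inl ⟨a, List.mem_cons_of_mem _ ha, he⟩
      · exact Or.inr (Or.inl ⟨a, b, he, List.mem_cons_of_mem _ ha, List.mem_cons_of_mem _ hb⟩)
      · refine Or.inr (Or.inr ?_)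
        rwa [List.getLast_cons (List.cons_ne_nil _ _)]

lemma wv_edge_not_mem_eList (b : H) : ∀ (v : H) (p : List H), s(wv, v0 b) ∉ eList v p := by
  intro v p h
  rcases mem_eList v p h with ⟨a, _, he⟩ | ⟨a, c, he, _, _⟩ | he <;>
    rw [Sym2.eq_iff] at he <;> simp at he

lemma mcount_eList (v : H) (p : List H) (h : (v :: p).Nodup) :
    mcount (eList v p) = p.length + 1 := by
  induction p generalizing v with
  | nil => simp [mcount_cons]
  | cons x p ih =>
    have hvx : v ≠ x := by simp at h; tauto
    have h2 : s(v1 v, v0 x) ∉ blossomMatching H := fun hm => hvx (v0_inj.mp (mem_M_v1 hm)).symm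
    rw [eList_cons, mcount_cons, mcount_cons, ih x (h.of_cons), if_pos (m_mem_M v), if_neg h2]
    simp

open SimpleGraph

/-- The walk `v₀ v₁ x₀ x₁ ... last₁ w` corresponding to a directed path `v :: p`. -/
def tWalk : (v : H) → (p : List H) → List.Chain E v p →
    ((v :: p).getLast (List.cons_ne_nil _ _) = tgt) → (blossomGraph E src tgt).Walk (v0 v) wv
  | v, [], _, hl =>
      Walk.cons (adj_m E src tgt v)
        (Walk.cons (by rw [show v = tgt from hl]; exact adj_tw E src tgt) Walk.nil)
  | v, x :: p, hc, hl =>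
      Walk.cons (adj_m E src tgt v)
        (Walk.cons (adj_arc E src tgt (List.chain_cons.mp hc).1)
          (tWalk x p (List.chain_cons.mp hc).2
            (by rwa [List.getLast_cons (List.cons_ne_nil _ _)] at hl)))

lemma tWalk_edges : ∀ (v : H) (p : List H) (hc : List.Chain E v p)
    (hl : (v :: p).getLast (List.cons_ne_nil _ _) = tgt),
    (tWalk E src tgt v p hc hl).edges = eList v p
  | v, [], _, hl => by simp [tWalk]
  | v, x :: p, hc, hl => by
    simp [tWalk, tWalk_edges x p _ _]
    exact tWalk_edges x p _ _

lemma tWalk_support : ∀ (v : H) (p : List H) (hc : List.Chain E v p)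
    (hl : (v :: p).getLast (List.cons_ne_nil _ _) = tgt),
    (tWalk E src tgt v p hc hl).support = ((v :: p).flatMap fun a => [v0 a, v1 a]) ++ [wv]
  | v, [], _, hl => by simp [tWalk]
  | v, x :: p, hc, hl => by
    simp [tWalk]
    exact (tWalk_support x p _ _).trans (by simp)

lemma tWalk_length (v : H) (p : List H) (hc : List.Chain E v p)
    (hl : (v :: p).getLast (List.cons_ne_nil _ _) = tgt) :
    (tWalk E src tgt v p hc hl).length = 2 * (p.length + 1) := by
  rw [← Walk.length_edges, tWalk_edges, eList_length]

lemma mem_flat {x : Wt H} {l : List H} :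
    x ∈ (l.flatMap fun a => [v0 a, v1 a]) ↔ ∃ a ∈ l, x = v0 a ∨ x = v1 a := by
  simp [List.mem_flatMap]

lemma flat_nodup : ∀ (l : List H), l.Nodup →
    (((l.flatMap fun a => [v0 a, v1 a]) ++ [wv] : List (Wt H))).Nodup
  | [], _ => by simp
  | a :: l, h => by
    have ih := flat_nodup l h.of_cons
    have ha : a ∉ l := (List.nodup_cons.mp h).1
    simp only [List.flatMap_cons, List.cons_append, List.append_assoc, List.nil_append]
    refine List.nodup_cons.mpr ⟨?_, List.nodup_cons.mpr ⟨?_, by simpa using ih⟩⟩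
    · intro h1
      rcases List.mem_cons.mp h1 with h1 | h1
      · exact v0_ne_v1 h1
      rcases List.mem_append.mp h1 with h1 | h1
      · obtain ⟨b, hb, h2 | h2⟩ := mem_flat.mp h1
        · exact ha (v0_inj.mp h2 ▸ hb)
        · exact v0_ne_v1 h2
      · exact v0_ne_wv (List.mem_singleton.mp h1)
    · intro h1
      rcases List.mem_append.mp h1 with h1 | h1
      · obtain ⟨b, hb, h2 | h2⟩ := mem_flat.mp h1
        · exact v1_ne_v0 h2
        · exact ha (v1_inj.mp h2 ▸ hb)
      · exact v1_ne_wv (List.mem_singleton.mp h1)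

lemma tWalk_isPath (v : H) (p : List H) (hc : List.Chain E v p)
    (hl : (v :: p).getLast (List.cons_ne_nil _ _) = tgt) (hnd : (v :: p).Nodup) :
    (tWalk E src tgt v p hc hl).IsPath := by
  rw [Walk.isPath_def, tWalk_support]
  exact flat_nodup _ hnd

lemma sym2_m_inj : Function.Injective (fun v : H => s(v0 v, v1 v)) := by
  intro a b h
  rw [Sym2.eq_iff] at h
  rcases h with ⟨h1, _⟩ | ⟨h1, _⟩
  · exact v0_inj.mp h1
  · exact absurd h1 v0_ne_v1

/-- In any trail ending at `w`, at most half of the edges (strictly) are matched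
edges, because matched edges are pairwise disjoint and avoid `w`. -/
lemma count_le [Fintype H] {a : Wt H} (R : (blossomGraph E src tgt).Walk a wv)
    (hR : R.edges.Nodup) : 2 * mcount R.edges ≤ R.length := by
  set T : Finset H := Finset.univ.filter (fun v => s(v0 v, v1 v) ∈ R.edges) with hT
  have hTcard : T.card = mcount R.edges := by
    have himg : T.image (fun v => s(v0 v, v1 v))
        = (R.edges.filter (fun e => e ∈ blossomMatching H)).toFinset := by
      ext e
      simp only [hT, Finset.mem_image, Finset.mem_filter, Finset.mem_univ, true_and,
        List.mem_toFinset, List.mem_filter, decide_eq_true_eq]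
      constructor
      · rintro ⟨v, hv, rfl⟩; exact ⟨hv, m_mem_M v⟩
      · rintro ⟨he, v, rfl⟩; exact ⟨v, he, rfl⟩
    have := Finset.card_image_of_injective T (sym2_m_inj (H := H))
    rw [himg] at this
    rw [← this, List.toFinset_card_of_nodup (hR.filter _), mcount,
      List.countP_eq_length_filter]
  have hsub : insert wv ((T.image v0) ∪ (T.image v1)) ⊆ R.support.toFinset := by
    intro x hx
    rw [List.mem_toFinset]
    rcases Finset.mem_insert.mp hx with rfl | hx
    · exact R.end_mem_support
    rcases Finset.mem_union.mp hx with hx | hx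
    · obtain ⟨v, hv, rfl⟩ := Finset.mem_image.mp hx
      rw [hT, Finset.mem_filter] at hv
      exact Walk.fst_mem_support_of_mem_edges R hv.2
    · obtain ⟨v, hv, rfl⟩ := Finset.mem_image.mp hx
      rw [hT, Finset.mem_filter] at hv
      exact Walk.snd_mem_support_of_mem_edges R hv.2
  have hdisj : Disjoint (T.image v0) (T.image v1) := by
    rw [Finset.disjoint_left]
    rintro x hx hx'
    obtain ⟨v, _, rfl⟩ := Finset.mem_image.mp hx
    obtain ⟨u, _, h⟩ := Finset.mem_image.mp hx'
    exact v1_ne_v0 h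
  have hwv : wv ∉ (T.image v0) ∪ (T.image v1) := by
    intro h
    rcases Finset.mem_union.mp h with h | h <;> obtain ⟨v, _, hv⟩ := Finset.mem_image.mp h
    · exact v0_ne_wv hv
    · exact v1_ne_wv hv
  have hcard : (insert wv ((T.image v0) ∪ (T.image v1))).card = 2 * T.card + 1 := by
    rw [Finset.card_insert_of_notMem hwv, Finset.card_union_of_disjoint hdisj,
      Finset.card_image_of_injective _ (fun a b h => v0_inj.mp h),
      Finset.card_image_of_injective _ (fun a b h => v1_inj.mp h)]
    ring
  have h1 := Finset.card_le_card hsub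
  have h2 := List.toFinset_card_le R.support
  have h3 := Walk.length_support R
  omega

/-- The key structure lemma: a path from `v₀` to `w` of even length `n` with
exactly `n/2` matched edges must be of the form `v₀ v₁ x₀ x₁ ⋯ tgt₁ w`. -/
lemma structA [Fintype H] : ∀ (n : ℕ) (v : H) (Q : (blossomGraph E src tgt).Walk (v0 v) wv),
    Q.IsPath → Q.length = n → 2 * mcount Q.edges = n →
    ∃ p : List H, Q.edges = eList v p ∧ List.Chain E v p ∧
      (v :: p).getLast (List.cons_ne_nil _ _) = tgt ∧ (v :: p).Nodup ∧
      ∀ a ∈ v :: p, v0 a ∈ Q.support := by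
  intro n
  induction n using Nat.strong_induction_on with
  | _ n ih =>
  intro v Q hp hlen hcount
  cases Q with
  | cons h Q₁ =>
  rename_i b
  by_cases hm : s(v0 v, b) ∈ blossomMatching H
  · -- first edge is matched, so `b = v1 v`
    obtain rfl : b = v1 v := mem_M_v0 hm
    cases Q₁ with
    | cons h₂ Q₂ =>
    rename_i c
    have hp₂ : Q₂.IsPath := (hp.of_cons).of_cons
    have hv0v : v0 v ∉ Q₂.support := by
      have := hp.support_nodup
      rw [Walk.support_cons, Walk.support_cons, List.nodup_cons] at this
      exact fun hmem => this.1 (List.mem_cons_of_mem _ hmem)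
    rcases adj_v1_cases E src tgt h₂ with rfl | ⟨u, hEu, rfl⟩ | ⟨rfl, rfl⟩
    · exact absurd Q₂.start_mem_support hv0v
    · -- next edge is the arc `v₁ → u₀`; recurse
      have huv : u ≠ v := fun h' => hv0v (h' ▸ Q₂.start_mem_support)
      have harc : s(v1 v, v0 u) ∉ blossomMatching H := fun hm' =>
        huv (v0_inj.mp (mem_M_v1 hm'))
      have hlen₂ : Q₂.length + 2 = n := by
        rw [← hlen]; simp [Walk.length_cons]
      have hcount₂ : 2 * mcount Q₂.edges = Q₂.length := by
        rw [Walk.edges_cons, Walk.edges_cons, mcount_cons, mcount_cons,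
          if_pos hm, if_neg harc] at hcount
        omega
      obtain ⟨p', hE', hc', hl', hnd', hsupp'⟩ :=
        ih Q₂.length (by omega) u Q₂ hp₂ rfl hcount₂
      refine ⟨u :: p', ?_, List.chain_cons.mpr ⟨hEu, hc'⟩, ?_, ?_, ?_⟩
      · rw [Walk.edges_cons, Walk.edges_cons, hE', eList_cons]
      · rwa [List.getLast_cons (List.cons_ne_nil _ _)]
      · rw [List.nodup_cons]
        refine ⟨fun hvm => ?_, hnd'⟩
        exact hv0v (hsupp' v hvm)
      · intro a ha
        rcases List.mem_cons.mp ha with rfl | ha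
        · exact Walk.start_mem_support _
        · exact List.mem_cons_of_mem _ (List.mem_cons_of_mem _ (hsupp' a ha))
    · -- next edge goes to `w`: the path ends, `v = tgt`
      have : Q₂ = Walk.nil := (Walk.isPath_iff_eq_nil).mp hp₂
      subst this
      refine ⟨[], ?_, List.Chain.nil, rfl, List.nodup_singleton v, ?_⟩
      · simp [Walk.edges_cons]
      · intro a ha
        rcases List.mem_cons.mp ha with rfl | ha
        · exact Walk.start_mem_support _
        · simp at ha
  · -- first edge is unmatched: impossible
    rcases adj_v0_cases E src tgt h with rfl | ⟨u, hEu, rfl⟩ | ⟨rfl, rfl⟩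
    · exact absurd (m_mem_M v) hm
    · -- enters an arc backwards: contradicts the edge count
      have hnd₁ : Q₁.edges.Nodup := (hp.of_cons).edges_nodup
      have hle := count_le E src tgt Q₁ hnd₁
      rw [Walk.edges_cons, mcount_cons, if_neg hm] at hcount
      rw [Walk.length_cons] at hlen
      omega
    · -- goes back to `w` immediately: length 1, count 0, parity contradiction
      have : Q₁ = Walk.nil := (Walk.isPath_iff_eq_nil).mp hp.of_cons
      subst this
      rw [Walk.edges_cons, mcount_cons, if_neg hm] at hcount
      rw [Walk.length_cons] at hlen
      simp at hcount hlen
      omega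

lemma eList_mem_discr {v x : H} {r : List H} {e : Sym2 (Wt H)} (he : e ∈ eList x r)
    (hv : v ∉ x :: r) : e ≠ s(v0 v, v1 v) ∧ ∀ y, e ≠ s(v1 v, y) := by
  rcases mem_eList x r he with ⟨a, ha, rfl⟩ | ⟨a, b, rfl, ha, hb⟩ | rfl
  · refine ⟨fun h => ?_, fun y h => ?_⟩ <;> rw [Sym2.eq_iff] at h <;> simp at h
    · exact hv (h ▸ ha)
    · obtain ⟨h1, h2⟩ := h
      exact hv (h2 ▸ ha)
  · refine ⟨fun h => ?_, fun y h => ?_⟩ <;> rw [Sym2.eq_iff] at h <;> simp at h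
    · obtain ⟨h1, h2⟩ := h
      exact hv (h1 ▸ ha)
    · obtain ⟨h1, h2⟩ := h
      exact hv (h1 ▸ ha)
  · refine ⟨fun h => ?_, fun y h => ?_⟩ <;> rw [Sym2.eq_iff] at h <;> simp at h
    obtain ⟨h1, h2⟩ := h
    exact hv (h1 ▸ List.getLast_mem _)

lemma eList_nil_discr {v x : H} (h : s(v1 v, v0 x) ∈ eList v ([] : List H)) (hvx : v ≠ x) :
    False := by
  rcases List.mem_pair.mp h with h | h <;> rw [Sym2.eq_iff] at h <;> simp at h
  exact hvx h.symm

lemma eList_inj : ∀ (p p' : List H) (v : H), (v :: p).Nodup → (v :: p').Nodup →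
    (∀ e, e ∈ eList v p ↔ e ∈ eList v p') → p = p' := by
  intro p
  induction p with
  | nil =>
    intro p' v hnd hnd' hiff
    cases p' with
    | nil => rfl
    | cons x r =>
      have hx : s(v1 v, v0 x) ∈ eList v ([] : List H) := (hiff _).mpr (by simp)
      have hvx : v ≠ x := by simp at hnd'; tauto
      exact absurd (eList_nil_discr hx hvx) not_false
  | cons x r ihp =>
    intro p' v hnd hnd' hiff
    have hvx : v ≠ x := by simp at hnd; tauto
    cases p' with
    | nil =>
      have hx : s(v1 v, v0 x) ∈ eList v ([] : List H) := (hiff _).mp (by simp)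
      exact absurd (eList_nil_discr hx hvx) not_false
    | cons x' r' =>
      have hvx' : v ≠ x' := by simp at hnd'; tauto
      have hvnm : v ∉ x' :: r' := by simp at hnd' ⊢; tauto
      have hvnm2 : v ∉ x :: r := by simp at hnd ⊢; tauto
      have hxx' : x = x' := by
        have hx : s(v1 v, v0 x) ∈ eList v (x' :: r') := (hiff _).mp (by simp)
        rcases List.mem_cons.mp hx with h | h
        · rw [Sym2.eq_iff] at h; simp at h
          exact absurd h.symm hvx
        rcases List.mem_cons.mp h with h | h
        · rw [Sym2.eq_iff] at h; simp at h
          exact h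
        · exact absurd rfl ((eList_mem_discr h hvnm).2 _)
      subst hxx'
      have hiff' : ∀ e, e ∈ eList x r ↔ e ∈ eList x r' := by
        intro e
        constructor
        · intro he
          have h2 : e ∈ eList v (x :: r') := (hiff e).mp (by simp [he])
          rcases List.mem_cons.mp h2 with h | h
          · exact absurd h (eList_mem_discr he hvnm2).1
          rcases List.mem_cons.mp h with h | h
          · exact absurd h ((eList_mem_discr he hvnm2).2 _)
          · exact h
        · intro he
          have h2 : e ∈ eList v (x :: r) := (hiff e).mpr (by simp [he])
          rcases List.mem_cons.mp h2 with h | h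
          · exact absurd h (eList_mem_discr he hvnm).1
          rcases List.mem_cons.mp h with h | h
          · exact absurd h ((eList_mem_discr he hvnm).2 _)
          · exact h
      rw [ihp r' x hnd.of_cons hnd'.of_cons hiff']

lemma blossom_of_path (p : List H) (hc : List.Chain E src p)
    (hl : (src :: p).getLast (List.cons_ne_nil _ _) = tgt) (hnd : (src :: p).Nodup) :
    IsBlossomThrough (blossomGraph E src tgt) (blossomMatching H) wv
      {e | e ∈ s(wv, v0 src) :: eList src p} := by
  have hcyc : (Walk.cons (adj_ws E src tgt) (tWalk E src tgt src p hc hl)).IsCycle := by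
    rw [Walk.cons_isCycle_iff]
    refine ⟨tWalk_isPath E src tgt src p hc hl hnd, ?_⟩
    rw [tWalk_edges]
    exact wv_edge_not_mem_eList src src p
  refine ⟨Walk.cons (adj_ws E src tgt) (tWalk E src tgt src p hc hl), p.length + 1,
    hcyc, ?_, ?_, ?_⟩
  · rw [Walk.length_cons, tWalk_length]
  · rw [ncard_eq_mcount _ hcyc.isCircuit.isTrail.edges_nodup, Walk.edges_cons,
      tWalk_edges, mcount_cons, if_neg (wv_not_M_left), mcount_eList src p hnd]
  · rw [Walk.edges_cons, tWalk_edges]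

lemma half [Fintype H] (h : (blossomGraph E src tgt).Adj wv (v0 src))
    (c₁ : (blossomGraph E src tgt).Walk (v0 src) wv)
    (hcyc : (Walk.cons h c₁).IsCycle)
    (hlc : (Walk.cons h c₁).length = 2 * mcount (Walk.cons h c₁).edges + 1) :
    ∃ p : List H, List.Chain E src p ∧
      (src :: p).getLast (List.cons_ne_nil _ _) = tgt ∧ (src :: p).Nodup ∧
      (Walk.cons h c₁).edges = s(wv, v0 src) :: eList src p := by
  obtain ⟨hpath, -⟩ := (Walk.cons_isCycle_iff _ _).mp hcyc
  rw [Walk.length_cons, Walk.edges_cons, mcount_cons, if_neg (wv_not_M_left)] at hlc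
  obtain ⟨p, hE', hc', hl', hnd', -⟩ :=
    structA E src tgt c₁.length src c₁ hpath rfl (by omega)
  exact ⟨p, hc', hl', hnd', by rw [Walk.edges_cons, hE']⟩

lemma path_of_blossom [Fintype H] (C : Set (Sym2 (Wt H)))
    (hC : IsBlossomThrough (blossomGraph E src tgt) (blossomMatching H) wv C) :
    ∃ p : List H, List.Chain E src p ∧
      (src :: p).getLast (List.cons_ne_nil _ _) = tgt ∧ (src :: p).Nodup ∧
      C = {e | e ∈ s(wv, v0 src) :: eList src p} := by
  obtain ⟨c, k, hcyc, hlen, hcard, rfl⟩ := hC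
  have hnde : c.edges.Nodup := hcyc.isCircuit.isTrail.edges_nodup
  have hmc : mcount c.edges = k := by rw [← ncard_eq_mcount _ hnde]; exact hcard
  have hlc : c.length = 2 * mcount c.edges + 1 := by rw [hmc]; exact hlen
  have h3 : 3 ≤ c.length := hcyc.three_le_length
  cases c with
  | nil => exact absurd rfl hcyc.ne_nil
  | cons h c₁ =>
  rename_i b
  rcases adj_w_cases E src tgt h with rfl | rfl
  · obtain ⟨p, hc', hl', hnd', hE'⟩ := half E src tgt h c₁ hcyc hlc
    exact ⟨p, hc', hl', hnd', by rw [hE']⟩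
  · -- the cycle starts towards `tgt₁`; reverse the inner path
    obtain ⟨hpath, hne⟩ := (Walk.cons_isCycle_iff _ _).mp hcyc
    have hc₁len : 0 < c₁.reverse.length := by
      rw [Walk.length_reverse]
      rw [Walk.length_cons] at h3
      omega
    obtain ⟨u, h', c₂, hrev⟩ :=
      (Walk.not_nil_iff).mp ((Walk.not_nil_iff_lt_length).mpr hc₁len)
    have hrevpath : c₁.reverse.IsPath := hpath.reverse
    rcases adj_w_cases E src tgt h' with rfl | rfl
    · -- main case: build the rotated cycle through `src₀`
      rw [hrev] at hrevpath
      have hc₂path : c₂.IsPath := hrevpath.of_cons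
      have hwv : wv ∉ c₂.support := by
        have := hrevpath.support_nodup
        rw [Walk.support_cons, List.nodup_cons] at this
        exact this.1
      -- edges bookkeeping
      have hc₁e : c₁.edges = c₂.edges.reverse ++ [s(wv, v0 src)] := by
        have e1 : c₁.reverse.edges = c₁.edges.reverse := Walk.edges_reverse c₁
        rw [hrev, Walk.edges_cons] at e1
        have := congrArg List.reverse e1
        rw [List.reverse_reverse] at this
        rw [← this, List.reverse_cons]
      -- the new cycle
      set q : (blossomGraph E src tgt).Walk (v0 src) wv :=
        c₂.append (Walk.cons (adj_tw E src tgt) Walk.nil) with hq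
      have hqsupp : q.support = c₂.support ++ [wv] := by
        rw [hq, Walk.support_append]
        simp
      have hqpath : q.IsPath := by
        rw [Walk.isPath_def, hqsupp]
        have h1 := hc₂path.support_nodup
        rw [List.nodup_append]
        refine ⟨h1, List.nodup_singleton _, ?_⟩
        intro x hx hx' hy
        rw [List.mem_singleton] at hy
        subst hy
        rintro rfl
        exact hwv hx
      have hqe : q.edges = c₂.edges ++ [s(v1 tgt, wv)] := by
        rw [hq, Walk.edges_append]
        simp
      have hd : (Walk.cons (adj_ws E src tgt) q).IsCycle := by
        rw [Walk.cons_isCycle_iff]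
        refine ⟨hqpath, ?_⟩
        rw [hqe, List.mem_append]
        rintro (hx | hx)
        · have : s(wv, v0 src) ∉ c₂.edges := by
            have := hrevpath.edges_nodup
            rw [Walk.edges_cons, List.nodup_cons] at this
            exact this.1
          exact this hx
        · rw [List.mem_singleton, Sym2.eq_iff] at hx
          simp at hx
      -- permutation between the two edge lists
      have hperm : (Walk.cons h c₁).edges.Perm (Walk.cons (adj_ws E src tgt) q).edges := by
        rw [Walk.edges_cons, Walk.edges_cons, hc₁e, hqe, Sym2.eq_swap (a := v1 tgt)]
        exact ((List.perm_append_singleton _ _).cons _).trans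
          ((((c₂.edges.reverse_perm).cons _).cons _).trans
            ((List.Perm.swap _ _ _).trans
              (((List.perm_append_singleton _ _).symm).cons _)))
      have hdlc : (Walk.cons (adj_ws E src tgt) q).length
          = 2 * mcount (Walk.cons (adj_ws E src tgt) q).edges + 1 := by
        have hlen' : (Walk.cons (adj_ws E src tgt) q).length = (Walk.cons h c₁).length := by
          rw [← Walk.length_edges, ← Walk.length_edges, hperm.length_eq]
        rw [hlen', hlc, show mcount (Walk.cons h c₁).edges
          = mcount (Walk.cons (adj_ws E src tgt) q).edges from hperm.countP_eq _]
      obtain ⟨p, hc', hl', hnd', hE'⟩ := half E src tgt (adj_ws E src tgt) q hd hdlc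
      refine ⟨p, hc', hl', hnd', ?_⟩
      ext e
      simp only [Set.mem_setOf_eq]
      rw [← hE']
      exact hperm.mem_iff
    · -- degenerate case: the reversed walk also starts with `tgt₁`: impossible
      rw [hrev] at hrevpath
      have : c₂ = Walk.nil := (Walk.isPath_iff_eq_nil).mp hrevpath.of_cons
      subst this
      have : c₁.length = 1 := by
        have := Walk.length_reverse c₁
        rw [hrev] at this
        simpa using this.symm
      rw [Walk.length_cons, this] at hlen
      omega

end BlossomAux

open BlossomAux in
/-- The blossoms of `(G, M)` containing the vertex `w` are in one-to-one
correspondence with the directed simple paths from `src` to `tgt` in the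
directed graph `(H, E)` (a path being recorded as its list of vertices, with no
repetitions). -/
theorem blossoms_equiv_paths {H : Type*} [Fintype H] (E : H → H → Prop)
    (src tgt : H) :
    Nonempty
      ({C : Set (Sym2 ((H × Fin 2) ⊕ Fin 2)) //
          IsBlossomThrough (blossomGraph E src tgt) (blossomMatching H)
            (Sum.inr 0) C} ≃
        {p : List H // p.Chain' E ∧ p.head? = some src ∧ p.getLast? = some tgt ∧
          p.Nodup}) := by
  classical
  let F : {p : List H // p.Chain' E ∧ p.head? = some src ∧ p.getLast? = some tgt ∧ p.Nodup} →
      {C : Set (Sym2 ((H × Fin 2) ⊕ Fin 2)) //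
        IsBlossomThrough (blossomGraph E src tgt) (blossomMatching H) (Sum.inr 0) C} :=
    fun q => ⟨{e | e ∈ s(wv, v0 src) :: eList src q.val.tail}, by
      obtain ⟨l, h1, h2, h3, h4⟩ := q
      cases l with
      | nil => simp at h2
      | cons a t =>
        have ha : a = src := by simpa using h2
        rw [ha] at h1 h3 h4
        have hl : (src :: t).getLast (List.cons_ne_nil _ _) = tgt := by
          rw [List.getLast?_eq_getLast (List.cons_ne_nil _ _)] at h3
          simpa using h3
        exact blossom_of_path E src tgt t h1 hl h4⟩
  have hinj : Function.Injective F := by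
    rintro ⟨l, h1, h2, h3, h4⟩ ⟨l', h1', h2', h3', h4'⟩ hFeq
    have hval := congrArg Subtype.val hFeq
    simp only [F] at hval
    apply Subtype.ext
    cases l with
    | nil => simp at h2
    | cons a t =>
    cases l' with
    | nil => simp at h2'
    | cons a' t' =>
    have ha : a = src := by simpa using h2
    have ha' : a' = src := by simpa using h2'
    rw [ha] at h4
    rw [ha'] at h4'
    have hiff := Set.ext_iff.mp hval
    have hiff' : ∀ e, e ∈ eList src t ↔ e ∈ eList src t' := by
      intro e
      constructor
      · intro he
        have hm := (hiff e).mp (List.mem_cons_of_mem _ he)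
        rcases List.mem_cons.mp hm with h | h
        · exact absurd (h ▸ he) (wv_edge_not_mem_eList src src t)
        · exact h
      · intro he
        have hm := (hiff e).mpr (List.mem_cons_of_mem _ he)
        rcases List.mem_cons.mp hm with h | h
        · exact absurd (h ▸ he) (wv_edge_not_mem_eList src src t')
        · exact h
    show a :: t = a' :: t'
    rw [ha, ha']
    simp only [List.cons.injEq, true_and]
    exact eList_inj t t' src h4 h4' hiff'
  have hsurj : Function.Surjective F := by
    rintro ⟨C, hC⟩
    obtain ⟨p, hc', hl', hnd', hCset⟩ := path_of_blossom E src tgt C hC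
    refine ⟨⟨src :: p, hc', rfl, ?_, hnd'⟩, ?_⟩
    · rw [List.getLast?_eq_getLast (List.cons_ne_nil _ _), hl']
    · exact Subtype.ext hCset.symm
  exact ⟨(Equiv.ofBijective F ⟨hinj, hsurj⟩).symm⟩
end
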